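/- arXiv:1107.3262 — 2 statements merged into one kernel-verified Lean document; each statement's English description precedes it below -/
import Mathlib

section
/- Let σ ≤ τ in the consecutive pattern poset. Then: (1) if |τ|−|σ| > 2 and σ ≤ x(τ) and x(τ) ≰ i(τ), then μ(σ,τ) = μ(σ,x(τ)); (2) if |τ|−|σ| = 2, τ is not monotone, and σ = i(τ) or σ = x(τ), then μ(σ,τ) = 1; (3) if |τ|−|σ| < 2, then μ(σ,τ) = (−1)^{|τ|−|σ|}; (4) in all remaining cases (σ ≤ τ with none of the above conditions holding), μ(σ,τ) = 0. -/
/-- Standardization of a list of distinct naturals: replace each entry by its rank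
(the number of entries less than or equal to it). -/
def stdize (s : List ℕ) : List ℕ := s.map (fun x => (s.filter (· ≤ x)).length)

/-- All contiguous subwords (infixes) of a list. -/
def infixes (l : List ℕ) : List (List ℕ) := l.inits.flatMap List.tails

/-- `l` is a permutation of `{1,…,d}` where `d = l.length ≥ 1`; these are the
elements of the consecutive pattern poset. -/
def IsPermList (l : List ℕ) : Prop := l ≠ [] ∧ l.Perm (List.range' 1 l.length)

/-- Consecutive pattern containment: `σ ≤ τ` iff `σ` is the standardization of
some contiguous subsequence of `τ`. -/
def PattLE (σ τ : List ℕ) : Prop := σ ∈ (infixes τ).map stdize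

instance (σ τ : List ℕ) : Decidable (PattLE σ τ) :=
  inferInstanceAs (Decidable (σ ∈ (infixes τ).map stdize))

/-- A permutation is monotone if its letters strictly increase or strictly decrease. -/
def MonotoneList (l : List ℕ) : Prop := l.Chain' (· < ·) ∨ l.Chain' (· > ·)

/-- The interior `i(τ)`: standardization of `τ` with first and last letters removed. -/
def pattInterior (τ : List ℕ) : List ℕ := stdize τ.tail.dropLast

/-- Length of the longest proper prefix of `τ` whose standardization is also the
standardization of a suffix of `τ`. -/
def extLen (τ : List ℕ) : ℕ :=
  Nat.findGreatest (fun k => stdize (τ.take k) = stdize (τ.drop (τ.length - k))) (τ.length - 1)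

/-- The exterior `x(τ)`: the longest permutation that is both a proper prefix and a
suffix of `τ`. -/
def pattExterior (τ : List ℕ) : List ℕ := stdize (τ.take (extLen τ))

/-- The closed interval `[σ,τ]` in the consecutive pattern poset, as a `Finset`. -/
def pattInterval (σ τ : List ℕ) : Finset (List ℕ) :=
  ((infixes τ).map stdize).toFinset.filter (fun z => PattLE σ z)

/-- The open interval `(σ,τ)` in the consecutive pattern poset, as a `Finset`. -/
def openPattInterval (σ τ : List ℕ) : Finset (List ℕ) :=
  ((infixes τ).map stdize).toFinset.filter (fun z => PattLE σ z ∧ z ≠ σ ∧ z ≠ τ)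

/-- `τ` covers `σ` in the consecutive pattern poset: `σ < τ` and no element lies
strictly between them. -/
def CoveredBy (σ τ : List ℕ) : Prop :=
  PattLE σ τ ∧ σ ≠ τ ∧ ¬ ∃ ρ, IsPermList ρ ∧ PattLE σ ρ ∧ PattLE ρ τ ∧ ρ ≠ σ ∧ ρ ≠ τ

/-- `c` is a maximal chain of the interval `[σ,τ]`: it starts at `τ`, ends at `σ`,
and each element covers the next. -/
def IsMaxChainPatt (σ τ : List ℕ) (c : List (List ℕ)) : Prop :=
  c.head? = some τ ∧ c.getLast? = some σ ∧ c.Chain' (fun a b => CoveredBy b a)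

section MobiusAux

open List

lemma stdize_length (l : List ℕ) : (stdize l).length = l.length := by
  simp [stdize]

lemma stdize_nil : stdize [] = [] := rfl

/-- positional comparison equivalence -/
def Iso (l l' : List ℕ) : Prop :=
  l.length = l'.length ∧ ∀ i j, i < l.length → j < l.length →
    (l.getD i 0 < l.getD j 0 ↔ l'.getD i 0 < l'.getD j 0)

lemma Iso.symm {l l' : List ℕ} (h : Iso l l') : Iso l' l :=
  ⟨h.1.symm, fun i j hi hj => (h.2 i j (h.1 ▸ hi) (h.1 ▸ hj)).symm⟩

lemma map_getD_range (l : List ℕ) : (List.range l.length).map (fun j => l.getD j 0) = l := by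
  apply List.ext_getElem (by simp)
  intro i h1 h2
  simp only [List.getElem_map, List.getElem_range]
  exact List.getD_eq_getElem _ 0 h2

lemma countP_pos_eq (l : List ℕ) (p : ℕ → Bool) :
    l.countP p = (List.range l.length).countP (fun j => p (l.getD j 0)) := by
  conv_lhs => rw [← map_getD_range l]
  rw [List.countP_map]
  rfl

lemma filter_le_length_mono {a b : ℕ} (h : a ≤ b) (l : List ℕ) :
    (l.filter (· ≤ a)).length ≤ (l.filter (· ≤ b)).length := by
  rw [← List.countP_eq_length_filter, ← List.countP_eq_length_filter]
  apply List.countP_mono_left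
  intro x _ hx
  simp only [decide_eq_true_eq] at *
  omega

lemma filter_le_length_strict {a b : ℕ} (h : a < b) {l : List ℕ} (hb : b ∈ l) :
    (l.filter (· ≤ a)).length < (l.filter (· ≤ b)).length := by
  rw [← List.countP_eq_length_filter, ← List.countP_eq_length_filter]
  induction l with
  | nil => simp at hb
  | cons c t ih =>
    rw [List.countP_cons, List.countP_cons]
    by_cases hbc : b = c
    · subst hbc
      have h1 : ¬ (b ≤ a) := by omega
      have := List.countP_mono_left (l := t) (p := fun x => decide (x ≤ a))
        (q := fun x => decide (x ≤ b)) (by intro x _ hx; simp only [decide_eq_true_eq] at *; omega)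
      simp [h1]
      omega
    · have hbt : b ∈ t := by
        rcases List.mem_cons.1 hb with h' | h'
        · exact absurd h' hbc
        · exact h'
      have := ih hbt
      by_cases hc : c ≤ a
      · have hc2 : c ≤ b := by omega
        simp [hc, hc2]
        omega
      · by_cases hc2 : c ≤ b
        · simp [hc, hc2]
          omega
        · simp [hc, hc2]
          omega

lemma stdize_getD {l : List ℕ} {i : ℕ} (hi : i < l.length) :
    (stdize l).getD i 0 = (l.filter (· ≤ l.getD i 0)).length := by
  have h2 : i < (stdize l).length := by rw [stdize_length]; exact hi
  rw [List.getD_eq_getElem _ _ h2, List.getD_eq_getElem _ _ hi]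
  simp [stdize]

lemma getD_mem {l : List ℕ} {i : ℕ} (hi : i < l.length) : l.getD i 0 ∈ l := by
  rw [List.getD_eq_getElem _ _ hi]; exact List.getElem_mem _

lemma iso_stdize (l : List ℕ) : Iso l (stdize l) := by
  refine ⟨(stdize_length l).symm, fun i j hi hj => ?_⟩
  rw [stdize_getD hi, stdize_getD hj]
  constructor
  · intro h
    exact filter_le_length_strict h (getD_mem hj)
  · intro h
    by_contra hc
    push_neg at hc
    exact absurd (filter_le_length_mono hc l) (by omega)

lemma stdize_eq_of_iso {l l' : List ℕ} (h : Iso l l') : stdize l = stdize l' := by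
  apply List.ext_getElem (by rw [stdize_length, stdize_length, h.1])
  intro i h1 h2
  rw [← List.getD_eq_getElem _ 0 h1, ← List.getD_eq_getElem _ 0 h2]
  have hi : i < l.length := by rw [← stdize_length]; exact h1
  have hi' : i < l'.length := by rw [← h.1]; exact hi
  rw [stdize_getD hi, stdize_getD hi']
  rw [← List.countP_eq_length_filter, ← List.countP_eq_length_filter]
  conv_lhs => rw [countP_pos_eq]
  conv_rhs => rw [countP_pos_eq]
  rw [h.1]
  apply List.countP_congr
  intro j hj
  rw [List.mem_range] at hj
  simp only [decide_eq_true_eq]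
  have hl := h.1
  have e1 := h.2 i j hi (by omega)
  have e2 := h.2 j i (by omega) hi
  constructor <;> intro <;> omega

lemma iso_of_stdize_eq {l l' : List ℕ} (hlen : l.length = l'.length)
    (h : stdize l = stdize l') : Iso l l' := by
  refine ⟨hlen, fun i j hi hj => ?_⟩
  rw [(iso_stdize l).2 i j hi hj, h, ← (iso_stdize l').2 i j (hlen ▸ hi) (hlen ▸ hj)]

lemma stdize_idem (l : List ℕ) : stdize (stdize l) = stdize l :=
  stdize_eq_of_iso (iso_stdize l).symm


open List

lemma countP_le_range' {v n : ℕ} (h : v ≤ n) :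
    (List.range' 1 n).countP (fun x => decide (x ≤ v)) = v := by
  induction n with
  | zero =>
    simp only [List.range'_zero, List.countP_nil]
    omega
  | succ m ih =>
    rw [List.range'_concat, List.countP_append]
    by_cases hv : v ≤ m
    · rw [ih hv]
      simp [List.countP_cons, show ¬(1 + m ≤ v) by omega]
    · have hv2 : v = m + 1 := by omega
      subst hv2
      rw [List.countP_eq_length.2 (by
        intro a ha
        rw [List.mem_range'_1] at ha
        simp only [decide_eq_true_eq]
        omega)]
      simp [List.countP_cons, List.length_range']
      omega

lemma stdize_of_perm {l : List ℕ} (h : IsPermList l) : stdize l = l := by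
  apply List.ext_getElem (stdize_length l)
  intro i h1 h2
  rw [← List.getD_eq_getElem _ 0 h1, ← List.getD_eq_getElem _ 0 h2]
  rw [stdize_getD h2, ← List.countP_eq_length_filter]
  rw [h.2.countP_eq]
  have hmem : l.getD i 0 ∈ l := getD_mem h2
  have := h.2.mem_iff.1 hmem
  rw [List.mem_range'_1] at this
  exact countP_le_range' (by omega)

lemma stdize_nodup {l : List ℕ} (h : l.Nodup) : (stdize l).Nodup := by
  rw [List.nodup_iff_injective_get] at h ⊢
  intro ⟨i, hi⟩ ⟨j, hj⟩ hij
  simp only [List.get_eq_getElem] at hij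
  by_contra hne
  have hne' : i ≠ j := by simpa using hne
  have hi' : i < l.length := by rw [← stdize_length]; exact hi
  have hj' : j < l.length := by rw [← stdize_length]; exact hj
  have hll : l[i] ≠ l[j] := by
    intro he
    exact hne' (by
      have := h (a₁ := ⟨i, hi'⟩) (a₂ := ⟨j, hj'⟩) (by simpa using he)
      simpa using this)
  have iso := (iso_stdize l).2
  have e1 := iso i j hi' hj'
  have e2 := iso j i hj' hi'
  rw [List.getD_eq_getElem _ 0 hi', List.getD_eq_getElem _ 0 hj'] at e1 e2
  rw [List.getD_eq_getElem _ 0 hi, List.getD_eq_getElem _ 0 hj] at e1 e2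
  rw [hij] at e1 e2
  omega

lemma isPermList_stdize {l : List ℕ} (h1 : l ≠ []) (h2 : l.Nodup) : IsPermList (stdize l) := by
  constructor
  · simp [stdize, h1]
  · rw [stdize_length]
    have hnr : (List.range' 1 l.length).Nodup := by
      apply List.nodup_range' <;> norm_num
    apply List.perm_of_nodup_nodup_toFinset_eq (stdize_nodup h2) hnr
    apply Finset.eq_of_subset_of_card_le
    · intro x hx
      rw [List.mem_toFinset] at hx ⊢
      rw [List.mem_range'_1]
      simp only [stdize, List.mem_map] at hx
      obtain ⟨a, ha, rfl⟩ := hx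
      constructor
      · have : a ∈ l.filter (· ≤ a) := by
          rw [List.mem_filter]
          simp [ha]
        have := List.length_pos_of_mem this
        omega
      · have := List.length_filter_le (· ≤ a) l
        omega
    · rw [List.toFinset_card_of_nodup (stdize_nodup h2),
        List.toFinset_card_of_nodup hnr]
      simp [stdize_length]

lemma mem_infixes {u l : List ℕ} : u ∈ infixes l ↔ u <:+: l := by
  simp only [infixes, List.mem_flatMap, List.mem_inits, List.mem_tails]
  rw [List.infix_iff_suffix_prefix]
  tauto

lemma pattLE_iff {σ τ : List ℕ} : PattLE σ τ ↔ ∃ u, u <:+: τ ∧ stdize u = σ := by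
  simp only [PattLE, List.mem_map, mem_infixes]

lemma infix_eq_window {u l : List ℕ} (h : u <:+: l) :
    ∃ a, a + u.length ≤ l.length ∧ u = (l.drop a).take u.length := by
  obtain ⟨s, t, rfl⟩ := h
  refine ⟨s.length, by simp <;> omega, ?_⟩
  rw [show s ++ u ++ t = s ++ (u ++ t) by simp, List.drop_left, List.take_left]

lemma window_infix (a m : ℕ) (l : List ℕ) : (l.drop a).take m <:+: l :=
  ((l.drop a).take_prefix m).isInfix.trans (l.drop_suffix a).isInfix

lemma window_getD {l : List ℕ} {a m i : ℕ} (h : i < ((l.drop a).take m).length) :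
    ((l.drop a).take m).getD i 0 = l.getD (a + i) 0 := by
  have h2 : i < (l.drop a).length := by
    rw [List.length_take] at h
    omega
  have h3 : a + i < l.length := by
    rw [List.length_drop] at h2
    omega
  rw [List.getD_eq_getElem _ 0 h, List.getD_eq_getElem _ 0 h3,
    List.getElem_take, List.getElem_drop]

lemma window_iso {l l' : List ℕ} (h : Iso l l') (a m : ℕ) :
    Iso ((l.drop a).take m) ((l'.drop a).take m) := by
  have hlen : ((l.drop a).take m).length = ((l'.drop a).take m).length := by
    rw [List.length_take, List.length_take, List.length_drop, List.length_drop, h.1]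
  refine ⟨hlen, fun i j hi hj => ?_⟩
  rw [window_getD hi, window_getD hj, window_getD (hlen ▸ hi), window_getD (hlen ▸ hj)]
  have hwl : ((l.drop a).take m).length ≤ l.length - a := by
    rw [List.length_take, List.length_drop]
    omega
  exact h.2 (a + i) (a + j) (by omega) (by omega)

lemma pattLE_stdize_of_infix {u l : List ℕ} (h : u <:+: l) : PattLE (stdize u) (stdize l) := by
  obtain ⟨a, ha, hu⟩ := infix_eq_window h
  rw [pattLE_iff]
  refine ⟨((stdize l).drop a).take u.length, window_infix _ _ _, ?_⟩
  rw [← stdize_eq_of_iso (window_iso (iso_stdize l) a u.length), ← hu]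

lemma pattLE_stdize_elim {z l : List ℕ} (h : PattLE z (stdize l)) :
    ∃ v, v <:+: l ∧ stdize v = z := by
  rw [pattLE_iff] at h
  obtain ⟨u, hu, rfl⟩ := h
  obtain ⟨a, ha, hu2⟩ := infix_eq_window hu
  refine ⟨(l.drop a).take u.length, window_infix _ _ _, ?_⟩
  rw [stdize_eq_of_iso (window_iso (iso_stdize l) a u.length), ← hu2]

lemma pattLE_trans {a b c : List ℕ} (h1 : PattLE a b) (h2 : PattLE b c) : PattLE a c := by
  rw [pattLE_iff] at h2 ⊢
  obtain ⟨u, hu, rfl⟩ := h2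
  obtain ⟨v, hv, rfl⟩ := pattLE_stdize_elim h1
  exact ⟨v, hv.trans hu, rfl⟩

lemma pattLE_refl_perm {σ : List ℕ} (h : IsPermList σ) : PattLE σ σ := by
  nth_rewrite 1 [← stdize_of_perm h]
  rw [pattLE_iff]
  exact ⟨σ, List.infix_refl σ, rfl⟩

lemma pattLE_length {σ τ : List ℕ} (h : PattLE σ τ) : σ.length ≤ τ.length := by
  rw [pattLE_iff] at h
  obtain ⟨u, hu, rfl⟩ := h
  rw [stdize_length]
  exact hu.length_le

lemma pattLE_eq_of_length {σ τ : List ℕ} (h : PattLE σ τ) (hl : σ.length = τ.length) :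
    σ = stdize τ := by
  rw [pattLE_iff] at h
  obtain ⟨u, hu, rfl⟩ := h
  rw [hu.sublist.eq_of_length (by rw [← stdize_length, hl])]

lemma pattLE_nil {σ : List ℕ} (h : PattLE σ List.nil) : σ = [] := by
  have := pattLE_length h
  simp at this
  exact this

lemma pattLE_ne_nil {σ τ : List ℕ} (h : PattLE σ τ) (hσ : σ ≠ []) : τ ≠ [] := by
  intro he
  exact hσ (pattLE_nil (he ▸ h))


open List

lemma stdize_fix_interior (τ : List ℕ) : stdize (pattInterior τ) = pattInterior τ := stdize_idem _
lemma stdize_fix_exterior (τ : List ℕ) : stdize (pattExterior τ) = pattExterior τ := stdize_idem _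

lemma pattLE_nil_left (w : List ℕ) : PattLE [] w :=
  pattLE_iff.2 ⟨[], ⟨[], w, rfl⟩, rfl⟩

lemma tail_append_ne {s : List ℕ} (v : List ℕ) (hs : s ≠ []) : (s ++ v).tail = s.tail ++ v := by
  cases s with
  | nil => exact absurd rfl hs
  | cons a s' => simp

/-- an infix with nonempty material on both sides is an infix of the interior word -/
lemma infix_interior {τ s v t : List ℕ} (hτ : τ = s ++ v ++ t) (hs : s ≠ []) (ht : t ≠ []) :
    v <:+: τ.tail.dropLast := by
  subst hτ
  rw [show s ++ v ++ t = s ++ (v ++ t) by simp, tail_append_ne _ hs]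
  rw [show s.tail ++ (v ++ t) = (s.tail ++ v) ++ t by simp,
    List.dropLast_append_of_ne_nil ht]
  exact ⟨s.tail, t.dropLast, by simp⟩

lemma suffix_eq_drop {u l : List ℕ} (h : u <:+ l) : u = l.drop (l.length - u.length) :=
  List.suffix_iff_eq_drop.1 h

/-- an infix of length < length is an infix of dropLast or of tail -/
lemma infix_split {v τ : List ℕ} (h : v <:+: τ) (hlt : v.length < τ.length) :
    v <:+: τ.dropLast ∨ v <:+: τ.tail := by
  obtain ⟨s, t, rfl⟩ := h
  rcases List.eq_nil_or_concat t with rfl | ⟨t', b, rfl⟩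
  · right
    have hs : s ≠ [] := by
      intro he
      subst he
      simp at hlt
    rw [show s ++ v ++ [] = s ++ v by simp, tail_append_ne _ hs]
    exact ⟨s.tail, [], by simp⟩
  · left
    rw [show s ++ v ++ t'.concat b = (s ++ v ++ t') ++ [b] by simp]
    rw [List.dropLast_concat]
    exact ⟨s, t', rfl⟩

lemma pattLE_P_of_infix_dropLast {z τ : List ℕ} (hperm : IsPermList τ)
    (h : ∃ v, v <:+: τ.dropLast ∧ stdize v = z) : PattLE z (stdize τ.dropLast) := by
  obtain ⟨v, hv, rfl⟩ := h
  exact pattLE_stdize_of_infix hv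

/-- split a pattern containment: z ≤ τ with smaller length gives z ≤ P or z ≤ S -/
lemma pattLE_split {z τ : List ℕ} (hperm : IsPermList τ) (h : PattLE z τ)
    (hlt : z.length < τ.length) :
    PattLE z (stdize τ.dropLast) ∨ PattLE z (stdize τ.tail) := by
  rw [pattLE_iff] at h
  obtain ⟨u, hu, rfl⟩ := h
  rw [stdize_length] at hlt
  rcases infix_split hu hlt with h' | h'
  · exact Or.inl (pattLE_stdize_of_infix h')
  · exact Or.inr (pattLE_stdize_of_infix h')

lemma pattLE_P_self {τ : List ℕ} (hperm : IsPermList τ) : PattLE (stdize τ.dropLast) τ := by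
  have := pattLE_stdize_of_infix (l := τ) (u := τ.dropLast)
    (by rw [List.dropLast_eq_take]; exact (List.take_prefix _ _).isInfix)
  rwa [stdize_of_perm hperm] at this

lemma pattLE_S_self {τ : List ℕ} (hperm : IsPermList τ) : PattLE (stdize τ.tail) τ := by
  have := pattLE_stdize_of_infix (l := τ) (u := τ.tail)
    (by rw [← List.drop_one]; exact (List.drop_suffix _ _).isInfix)
  rwa [stdize_of_perm hperm] at this

lemma interior_eq_window (τ : List ℕ) : τ.tail.dropLast = (τ.drop 1).take (τ.length - 1 - 1) := by
  rw [← List.drop_one, List.dropLast_eq_take, List.length_drop]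

lemma dropLast_tail_comm (τ : List ℕ) : τ.tail.dropLast = τ.dropLast.tail := by
  rw [interior_eq_window, List.dropLast_eq_take, ← List.drop_one, List.drop_take]

lemma pattLE_I_P {τ : List ℕ} : PattLE (pattInterior τ) (stdize τ.dropLast) := by
  unfold pattInterior
  rw [dropLast_tail_comm]
  apply pattLE_stdize_of_infix
  rw [← List.drop_one]
  exact (List.drop_suffix _ _).isInfix

lemma pattLE_I_S {τ : List ℕ} : PattLE (pattInterior τ) (stdize τ.tail) := by
  unfold pattInterior
  apply pattLE_stdize_of_infix
  rw [List.dropLast_eq_take]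
  exact (List.take_prefix _ _).isInfix

lemma extLen_le (τ : List ℕ) : extLen τ ≤ τ.length - 1 := Nat.findGreatest_le _

lemma extLen_spec (τ : List ℕ) :
    stdize (τ.take (extLen τ)) = stdize (τ.drop (τ.length - extLen τ)) := by
  unfold extLen
  exact Nat.findGreatest_spec
    (P := fun k => stdize (τ.take k) = stdize (τ.drop (τ.length - k))) (m := 0) (Nat.zero_le _)
    (by show stdize (τ.take 0) = stdize (τ.drop (τ.length - 0)); simp [List.drop_length])

lemma extLen_max {τ : List ℕ} {j : ℕ} (hj : j ≤ τ.length - 1)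
    (h : stdize (τ.take j) = stdize (τ.drop (τ.length - j))) : j ≤ extLen τ :=
  Nat.le_findGreatest hj h

lemma exterior_length (τ : List ℕ) : (pattExterior τ).length = extLen τ := by
  have h1 := extLen_le τ
  rw [pattExterior, stdize_length, List.length_take]
  omega

lemma stdize_len_one {l : List ℕ} (h : l.length = 1) : stdize l = [1] := by
  obtain ⟨a, rfl⟩ := List.length_eq_one_iff.1 h
  simp [stdize]

lemma extLen_pos {τ : List ℕ} (h : 2 ≤ τ.length) : 1 ≤ extLen τ := by
  apply extLen_max (by omega)
  rw [stdize_len_one (by rw [List.length_take]; omega),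
    stdize_len_one (by rw [List.length_drop]; omega)]

/-- prefix patterns are nested -/
lemma pattLE_take_take {τ : List ℕ} {j m : ℕ} (h : j ≤ m) :
    PattLE (stdize (τ.take j)) (stdize (τ.take m)) := by
  have : τ.take j = (τ.take m).take j := by rw [List.take_take, min_eq_left h]
  rw [this]
  exact pattLE_stdize_of_infix (List.take_prefix _ _).isInfix

lemma pattLE_X_P {τ : List ℕ} : PattLE (pattExterior τ) (stdize τ.dropLast) := by
  have h1 := extLen_le τ
  rw [pattExterior, show τ.take (extLen τ) = (τ.dropLast).take (extLen τ) by
    rw [List.dropLast_eq_take, List.take_take, min_eq_left h1]]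
  exact pattLE_stdize_of_infix (List.take_prefix _ _).isInfix

lemma pattLE_X_S {τ : List ℕ} (hne : τ ≠ []) : PattLE (pattExterior τ) (stdize τ.tail) := by
  have h1 := extLen_le τ
  have hd : 1 ≤ τ.length := List.length_pos_of_ne_nil hne
  rw [pattExterior, extLen_spec, show τ.drop (τ.length - extLen τ)
      = (τ.tail).drop (τ.length - extLen τ - 1) by
    rw [← List.drop_one, List.drop_drop]
    congr 1
    omega]
  exact pattLE_stdize_of_infix (List.drop_suffix _ _).isInfix

lemma extLen_eq_top_iff {τ : List ℕ} (hne : τ ≠ []) :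
    extLen τ = τ.length - 1 ↔ stdize τ.dropLast = stdize τ.tail := by
  have hd : 1 ≤ τ.length := List.length_pos_of_ne_nil hne
  constructor
  · intro h
    have hs := extLen_spec τ
    rw [h] at hs
    rw [show τ.length - (τ.length - 1) = 1 by omega, List.drop_one] at hs
    rw [List.dropLast_eq_take]
    exact hs
  · intro h
    have : stdize (τ.take (τ.length - 1)) = stdize (τ.drop (τ.length - (τ.length - 1))) := by
      rw [← List.dropLast_eq_take, show τ.length - (τ.length - 1) = 1 by omega, List.drop_one]
      exact h
    have h2 := extLen_max (le_refl _) this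
    have h3 := extLen_le τ
    omega

open List

lemma getD_dropLast {τ : List ℕ} {i : ℕ} (h : i < τ.dropLast.length) :
    τ.dropLast.getD i 0 = τ.getD i 0 := by
  have h2 : i < τ.length := by
    rw [List.length_dropLast] at h
    omega
  rw [List.getD_eq_getElem _ _ h, List.getD_eq_getElem _ _ h2]
  exact List.getElem_dropLast h

lemma getD_tail {τ : List ℕ} {i : ℕ} (h : i < τ.tail.length) :
    τ.tail.getD i 0 = τ.getD (i + 1) 0 := by
  have h2 : i + 1 < τ.length := by
    rw [List.length_tail] at h
    omega
  rw [List.getD_eq_getElem _ _ h, List.getD_eq_getElem _ _ h2]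
  exact List.getElem_tail h

lemma getD_take {τ : List ℕ} {m i : ℕ} (h : i < (τ.take m).length) :
    (τ.take m).getD i 0 = τ.getD i 0 := by
  have h2 : i < τ.length := by
    rw [List.length_take] at h
    omega
  rw [List.getD_eq_getElem _ _ h, List.getD_eq_getElem _ _ h2]
  exact List.getElem_take

lemma chain'_of_adj {R : ℕ → ℕ → Prop} {τ : List ℕ}
    (h : ∀ i, i + 1 < τ.length → R (τ.getD i 0) (τ.getD (i+1) 0)) :
    τ.Chain' R := by
  refine List.isChain_iff_getElem.2 ?_
  intro i hi
  have h2 : i + 1 < τ.length := by omega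
  have h3 : i < τ.length := by omega
  have := h i h2
  rw [List.getD_eq_getElem _ _ h3, List.getD_eq_getElem _ _ h2] at this
  simpa using this

lemma chain'_adj {R : ℕ → ℕ → Prop} {τ : List ℕ} (hc : τ.Chain' R)
    {i : ℕ} (hi : i + 1 < τ.length) : R (τ.getD i 0) (τ.getD (i+1) 0) := by
  replace hc := List.isChain_iff_getElem.1 hc
  have := hc i (by omega)
  rw [List.getD_eq_getElem _ _ (by omega : i < τ.length), List.getD_eq_getElem _ _ hi]
  simpa using this

lemma mono_of_PS {τ : List ℕ} (hnd : τ.Nodup) (h : stdize τ.dropLast = stdize τ.tail) :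
    MonotoneList τ := by
  by_cases hd : τ.length ≤ 1
  · left
    match τ, hd with
    | [], _ => exact List.isChain_nil
    | [a], _ => exact List.isChain_singleton a
  push_neg at hd
  have hlen : τ.dropLast.length = τ.tail.length := by simp
  have hiso := iso_of_stdize_eq hlen h
  have adj : ∀ i, i + 2 < τ.length →
      (τ.getD i 0 < τ.getD (i+1) 0 ↔ τ.getD (i+1) 0 < τ.getD (i+2) 0) := by
    intro i hi
    have h1 : i < τ.dropLast.length := by simp; omega
    have h2 : i + 1 < τ.dropLast.length := by simp; omega
    have := hiso.2 i (i+1) h1 h2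
    rw [getD_dropLast h1, getD_dropLast h2, getD_tail (by simp at h1 ⊢; omega),
      getD_tail (by simp at h2 ⊢; omega)] at this
    exact this
  have adjne : ∀ i, i + 1 < τ.length → τ.getD i 0 ≠ τ.getD (i+1) 0 := by
    intro i hi he
    rw [List.getD_eq_getElem _ _ (by omega), List.getD_eq_getElem _ _ hi] at he
    rw [hnd.getElem_inj_iff] at he
    omega
  have key : ∀ i, i + 1 < τ.length →
      (τ.getD i 0 < τ.getD (i+1) 0 ↔ τ.getD 0 0 < τ.getD 1 0) := by
    intro i
    induction i with
    | zero => intro _; rfl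
    | succ m ih =>
      intro hi
      rw [← adj m (by omega)]
      exact ih (by omega)
  by_cases h01 : τ.getD 0 0 < τ.getD 1 0
  · left
    exact chain'_of_adj (fun i hi => (key i hi).2 h01)
  · right
    apply chain'_of_adj
    intro i hi
    have h1 := (key i hi).not.2 (by exact h01)
    have h2 := adjne i hi
    simp only [not_lt] at h1
    omega

lemma incr_getD_lt {τ : List ℕ} (hc : τ.Chain' (· < ·)) {i j : ℕ}
    (hi : i < τ.length) (hj : j < τ.length) :
    (τ.getD i 0 < τ.getD j 0 ↔ i < j) := by
  have hp := (List.isChain_iff_pairwise.1 hc)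
  rw [List.pairwise_iff_getElem] at hp
  constructor
  · intro hlt
    by_contra hij
    push_neg at hij
    rcases Nat.lt_or_ge j i with h' | h'
    · have := hp j i hj hi h'
      rw [List.getD_eq_getElem _ _ hi, List.getD_eq_getElem _ _ hj] at hlt
      omega
    · have : i = j := by omega
      subst this
      omega
  · intro hij
    have := hp i j hi hj hij
    rw [List.getD_eq_getElem _ _ hi, List.getD_eq_getElem _ _ hj]
    exact this

lemma decr_getD_lt {τ : List ℕ} (hc : τ.Chain' (· > ·)) {i j : ℕ}
    (hi : i < τ.length) (hj : j < τ.length) :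
    (τ.getD i 0 < τ.getD j 0 ↔ j < i) := by
  have hp := (List.isChain_iff_pairwise.1 hc)
  rw [List.pairwise_iff_getElem] at hp
  constructor
  · intro hlt
    by_contra hij
    push_neg at hij
    rcases Nat.lt_or_ge i j with h' | h'
    · have := hp i j hi hj h'
      rw [List.getD_eq_getElem _ _ hi, List.getD_eq_getElem _ _ hj] at hlt
      simp only [gt_iff_lt] at this
      omega
    · have : i = j := by omega
      subst this
      omega
  · intro hij
    have := hp j i hj hi hij
    rw [List.getD_eq_getElem _ _ hi, List.getD_eq_getElem _ _ hj]
    simpa using this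

lemma mono_window {τ : List ℕ} (h : MonotoneList τ) {a m : ℕ} (hm : a + m ≤ τ.length) :
    stdize ((τ.drop a).take m) = stdize (τ.take m) := by
  apply stdize_eq_of_iso
  have hl1 : ((τ.drop a).take m).length = m := by simp; omega
  have hl2 : (τ.take m).length = m := by simp; omega
  refine ⟨by rw [hl1, hl2], fun i j hi hj => ?_⟩
  rw [hl1] at hi hj
  rw [window_getD (by rw [hl1]; exact hi), window_getD (by rw [hl1]; exact hj),
    getD_take (by rw [hl2]; exact hi), getD_take (by rw [hl2]; exact hj)]
  rcases h with hc | hc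
  · rw [incr_getD_lt hc (by omega) (by omega), incr_getD_lt hc (by omega) (by omega)]
    omega
  · rw [decr_getD_lt hc (by omega) (by omega), decr_getD_lt hc (by omega) (by omega)]
    omega

lemma mono_pattern_unique {τ z : List ℕ} (hmono : MonotoneList τ) (hz : PattLE z τ) :
    z = stdize (τ.take z.length) := by
  obtain ⟨u, hu, rfl⟩ := pattLE_iff.1 hz
  obtain ⟨a, ha, hw⟩ := infix_eq_window hu
  rw [stdize_length]
  nth_rewrite 1 [hw]
  apply mono_window hmono
  have := List.length_drop (i := a) (l := τ)
  omega

open List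

lemma prefix_eq_take {u l : List ℕ} (h : u <+: l) : u = l.take u.length :=
  List.prefix_iff_eq_take.1 h

/-- common patterns of prefix and suffix lie below the exterior or the interior -/
lemma pattLE_PS_cases {τ z : List ℕ} (hne : τ ≠ [])
    (hP : PattLE z (stdize τ.dropLast)) (hS : PattLE z (stdize τ.tail)) :
    PattLE z (pattExterior τ) ∨ PattLE z (pattInterior τ) := by
  have hd : 1 ≤ τ.length := List.length_pos_of_ne_nil hne
  obtain ⟨v, hv, hvz⟩ := pattLE_stdize_elim hP
  obtain ⟨s, t, hst⟩ := hv
  by_cases hs : s = []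
  · obtain ⟨v', hv', hv'z⟩ := pattLE_stdize_elim hS
    obtain ⟨s', t', hst'⟩ := hv'
    by_cases ht' : t' = []
    · -- z is a bifix pattern of length j
      left
      subst hs
      have hvpre : v = τ.take v.length := by
        apply prefix_eq_take
        have h1 : v <+: τ.dropLast := ⟨t, by rw [← hst]; simp⟩
        rw [List.dropLast_eq_take] at h1
        exact h1.trans (List.take_prefix _ _)
      have hvsuf : v' = τ.drop (τ.length - v'.length) := by
        apply suffix_eq_drop
        subst ht'
        have h1 : v' <:+ τ.tail := ⟨s', by rw [← hst']; simp⟩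
        exact h1.trans (τ.tail_suffix)
      have hlv : v.length ≤ τ.length - 1 := by
        have := hst ▸ (List.length_dropLast (xs := τ))
        simp only [List.length_append] at this
        omega
      have hlvv : v'.length = v.length := by
        have e1 : v.length = z.length := by rw [← hvz, stdize_length]
        have e2 : v'.length = z.length := by rw [← hv'z, stdize_length]
        omega
      have hbif : stdize (τ.take v.length) = stdize (τ.drop (τ.length - v.length)) := by
        rw [← hvpre, ← hlvv, ← hvsuf, hvz, hv'z]
      have hje : v.length ≤ extLen τ := extLen_max hlv hbif
      rw [← hvz, hvpre]
      exact pattLE_take_take hje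
    · -- occurrence of z strictly inside on the right
      right
      have hτ : τ = (τ.head hne :: s') ++ v' ++ t' := by
        rw [List.cons_append, List.cons_append, hst']
        exact (List.cons_head_tail hne).symm
      rw [← hv'z]
      exact pattLE_stdize_of_infix (infix_interior hτ (by simp) ht')
  · -- occurrence of z strictly inside on the left
    right
    have hτ : τ = s ++ v ++ (t ++ [τ.getLast hne]) := by
      rw [show s ++ v ++ (t ++ [τ.getLast hne]) = (s ++ v ++ t) ++ [τ.getLast hne] by simp,
        hst]
      exact (List.dropLast_append_getLast hne).symm
    rw [← hvz]
    exact pattLE_stdize_of_infix (infix_interior hτ hs (by simp))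

/-- two lists with equal standardization have equal standardizations of corresponding windows -/
lemma stdize_window_congr {l l' : List ℕ} (hlen : l.length = l'.length)
    (h : stdize l = stdize l') (a m : ℕ) :
    stdize ((l.drop a).take m) = stdize ((l'.drop a).take m) :=
  stdize_eq_of_iso (window_iso (iso_of_stdize_eq hlen h) a m)

/-- key bifix lemma: if x(τ) ⊀ i(τ) then the only pattern of x(τ) not below i(τ) is x(τ) -/
lemma bifix_eq {τ z : List ℕ} (hne : τ ≠ [])
    (hXI : ¬ PattLE (pattExterior τ) (pattInterior τ))
    (hzX : PattLE z (pattExterior τ)) (hzI : ¬ PattLE z (pattInterior τ)) :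
    z = pattExterior τ := by
  have hd : 1 ≤ τ.length := List.length_pos_of_ne_nil hne
  have heD : extLen τ ≤ τ.length - 1 := extLen_le τ
  have he1 : 1 ≤ extLen τ := by
    by_contra hcon
    have he0 : extLen τ = 0 := by omega
    have : pattExterior τ = [] := by
      rw [pattExterior, he0, List.take_zero, stdize_nil]
    exact hXI (this ▸ pattLE_nil_left _)
  -- occurrence of z in the prefix copy of the exterior
  have hzX1 : PattLE z (stdize (τ.take (extLen τ))) := hzX
  obtain ⟨v, hv, hvz⟩ := pattLE_stdize_elim hzX1
  have hjv : v.length = z.length := by rw [← hvz, stdize_length]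
  have hje : v.length ≤ extLen τ := by
    have := hv.length_le
    rw [List.length_take] at this
    omega
  obtain ⟨s, t, hst⟩ := hv
  have hdropne : τ.drop (extLen τ) ≠ [] := by
    intro hcon
    have := List.length_drop (i := extLen τ) (l := τ)
    rw [hcon] at this
    simp at this
    omega
  have hs : s = [] := by
    by_contra hscon
    apply hzI
    have hτ : τ = s ++ v ++ (t ++ τ.drop (extLen τ)) := by
      rw [show s ++ v ++ (t ++ τ.drop (extLen τ)) = (s ++ v ++ t) ++ τ.drop (extLen τ) by simp,
        hst, List.take_append_drop]
    rw [← hvz]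
    exact pattLE_stdize_of_infix (infix_interior hτ hscon (by simp [hdropne]))
  subst hs
  have hvpre : v = τ.take v.length := by
    have h1 : v <+: τ.take (extLen τ) := ⟨t, by simpa using hst⟩
    have h2 := prefix_eq_take h1
    rw [List.take_take, min_eq_left hje] at h2
    exact h2
  -- occurrence of z in the suffix copy of the exterior
  have hzX2 : PattLE z (stdize (τ.drop (τ.length - extLen τ))) := by
    rw [← extLen_spec]
    exact hzX1
  obtain ⟨v', hv', hv'z⟩ := pattLE_stdize_elim hzX2
  have hjv' : v'.length = z.length := by rw [← hv'z, stdize_length]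
  obtain ⟨s', t', hst'⟩ := hv'
  have htake_ne : τ.take (τ.length - extLen τ) ≠ [] := by
    intro hcon
    have := List.length_take (i := τ.length - extLen τ) (l := τ)
    rw [hcon] at this
    simp at this
    omega
  have ht' : t' = [] := by
    by_contra htcon
    apply hzI
    have hτ : τ = (τ.take (τ.length - extLen τ) ++ s') ++ v' ++ t' := by
      rw [show (τ.take (τ.length - extLen τ) ++ s') ++ v' ++ t'
          = τ.take (τ.length - extLen τ) ++ (s' ++ v' ++ t') by simp, hst',
        List.take_append_drop]
    rw [← hv'z]
    exact pattLE_stdize_of_infix (infix_interior hτ (by simp [htake_ne]) htcon)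
  subst ht'
  have hv'suf : v' = τ.drop (τ.length - v'.length) := by
    apply suffix_eq_drop
    have h1 : v' <:+ τ.drop (τ.length - extLen τ) := ⟨s', by rw [← hst']; simp⟩
    exact h1.trans (List.drop_suffix _ _)
  by_cases hj : v.length = extLen τ
  · rw [← hvz, hvpre, hj]
    rfl
  · exfalso
    apply hzI
    -- z also occurs as a prefix of the suffix copy, which is interior
    have hlen1 : (τ.take (extLen τ)).length = (τ.drop (τ.length - extLen τ)).length := by
      rw [List.length_take, List.length_drop]
      omega
    have hwin := stdize_window_congr hlen1 (extLen_spec τ) 0 v.length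
    rw [List.drop_zero, List.drop_zero, List.take_take, min_eq_left hje] at hwin
    have hz2 : z = stdize ((τ.drop (τ.length - extLen τ)).take v.length) := by
      rw [← hwin, ← hvpre, hvz]
    have hτ2 : τ = τ.take (τ.length - extLen τ)
        ++ ((τ.drop (τ.length - extLen τ)).take v.length)
        ++ ((τ.drop (τ.length - extLen τ)).drop v.length) := by
      rw [show ∀ a b c : List ℕ, a ++ b ++ c = a ++ (b ++ c) by intros; simp,
        List.take_append_drop, List.take_append_drop]
    have hrest_ne : (τ.drop (τ.length - extLen τ)).drop v.length ≠ [] := by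
      intro hcon
      have := List.length_drop (i := v.length) (l := τ.drop (τ.length - extLen τ))
      rw [hcon, List.length_drop] at this
      simp at this
      omega
    rw [hz2]
    exact pattLE_stdize_of_infix (infix_interior hτ2 (by simp [htake_ne]) hrest_ne)

/-- the only patterns of length d-1 are the prefix and suffix patterns -/
lemma coatom_cases {σ τ : List ℕ} (h : PattLE σ τ) (hl : σ.length + 1 = τ.length) :
    σ = stdize τ.dropLast ∨ σ = stdize τ.tail := by
  obtain ⟨u, hu, rfl⟩ := pattLE_iff.1 h
  obtain ⟨s, t, hst⟩ := hu
  rw [stdize_length] at hl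
  have h3 : (s ++ u ++ t).length = τ.length := by rw [hst]
  simp only [List.length_append] at h3
  have hlen : s.length + t.length = 1 := by omega
  by_cases hs : s = []
  · left
    subst hs
    have hu2 : u = τ.take u.length := by
      apply prefix_eq_take
      exact ⟨t, by simpa using hst⟩
    have h4 : u = τ.take (τ.length - 1) := by
      rw [hu2]
      congr 1
      omega
    rw [List.dropLast_eq_take, ← h4]
  · right
    have hsl : 1 ≤ s.length := List.length_pos_of_ne_nil hs
    have ht : t = [] := by
      rw [← List.length_eq_zero_iff]
      omega
    subst ht
    have hu2 : u = τ.drop (τ.length - u.length) := by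
      apply suffix_eq_drop
      exact ⟨s, by simpa using hst⟩
    have h4 : u = τ.drop 1 := by
      rw [hu2]
      congr 1
      omega
    rw [← List.drop_one, ← h4]

open List

instance monoDec (l : List ℕ) : Decidable (MonotoneList l) := by
  unfold MonotoneList List.Chain'
  infer_instance

/-- the claimed value of the Möbius function -/
def fval (σ τ : List ℕ) : ℤ :=
  if h2 : τ.length - σ.length < 2 then (-1) ^ (τ.length - σ.length)
  else if τ.length - σ.length = 2 then
    if ¬ MonotoneList τ ∧ (σ = pattInterior τ ∨ σ = pattExterior τ) then 1 else 0
  else if PattLE σ (pattExterior τ) ∧ ¬ PattLE (pattExterior τ) (pattInterior τ) then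
    fval σ (pattExterior τ)
  else 0
termination_by τ.length
decreasing_by
  have h1 := extLen_le τ
  have h3 : (pattExterior τ).length = extLen τ := exterior_length τ
  omega

lemma perm_nodup {τ : List ℕ} (h : IsPermList τ) : τ.Nodup := by
  rw [h.2.nodup_iff]
  apply List.nodup_range' <;> norm_num

lemma perm_len_pos {τ : List ℕ} (h : IsPermList τ) : 1 ≤ τ.length :=
  List.length_pos_of_ne_nil h.1

lemma mem_pattInterval {z σ τ : List ℕ} :
    z ∈ pattInterval σ τ ↔ PattLE z τ ∧ PattLE σ z := by
  rw [pattInterval, Finset.mem_filter, List.mem_toFinset]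
  exact Iff.rfl

lemma mem_pattInterval_perm {z σ τ : List ℕ} (hσ : IsPermList σ) (hτ : IsPermList τ)
    (h : z ∈ pattInterval σ τ) : IsPermList z := by
  rw [mem_pattInterval] at h
  obtain ⟨u, hu, rfl⟩ := pattLE_iff.1 h.1
  apply isPermList_stdize
  · intro he
    subst he
    exact hσ.1 (pattLE_nil h.2)
  · exact (hu.sublist).nodup (perm_nodup hτ)

lemma pattInterval_nil {σ : List ℕ} (hσ : IsPermList σ) : pattInterval σ [] = ∅ := by
  apply Finset.eq_empty_of_forall_notMem
  intro z hz
  rw [mem_pattInterval] at hz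
  exact hσ.1 (pattLE_nil (pattLE_nil hz.1 ▸ hz.2))

lemma pattInterval_not_le {σ τ : List ℕ} (hσ : IsPermList σ) (h : ¬ PattLE σ τ) :
    pattInterval σ τ = ∅ := by
  apply Finset.eq_empty_of_forall_notMem
  intro z hz
  rw [mem_pattInterval] at hz
  exact h (pattLE_trans hz.2 hz.1)

lemma pattInterval_self {σ : List ℕ} (hσ : IsPermList σ) : pattInterval σ σ = {σ} := by
  apply Finset.ext
  intro z
  rw [mem_pattInterval, Finset.mem_singleton]
  constructor
  · rintro ⟨h1, h2⟩
    have e1 := pattLE_length h1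
    have e2 := pattLE_length h2
    have := pattLE_eq_of_length h1 (by omega)
    rwa [stdize_of_perm hσ] at this
  · rintro rfl
    exact ⟨pattLE_refl_perm hσ, pattLE_refl_perm hσ⟩

lemma PS_of_mono {τ : List ℕ} (hm : MonotoneList τ) : stdize τ.dropLast = stdize τ.tail := by
  rcases List.eq_nil_or_concat τ with rfl | ⟨t', b, rfl⟩
  · rfl
  · set τ := t'.concat b with hτ
    have hd : 1 ≤ τ.length := by simp [hτ]
    have h1 : τ.tail = (τ.drop 1).take (τ.length - 1) := by
      rw [← List.drop_one, List.take_of_length_le (by rw [List.length_drop])]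
    rw [h1, mono_window hm (by omega), List.dropLast_eq_take]

lemma mono_not_top {τ σ : List ℕ} (hm : MonotoneList τ) (h : PattLE σ τ)
    (hk : σ.length ≤ τ.length) : σ = stdize (τ.take σ.length) := mono_pattern_unique hm h

lemma mono_sigma_I {τ σ : List ℕ} (hm : MonotoneList τ) (h : PattLE σ τ)
    (hk : σ.length + 2 = τ.length) : σ = pattInterior τ := by
  rw [mono_pattern_unique hm h, pattInterior, interior_eq_window,
    mono_window hm (by omega)]
  congr 2
  omega

open List

lemma fval_self {σ : List ℕ} : fval σ σ = 1 := by
  rw [fval, dif_pos (by omega)]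
  simp

set_option maxHeartbeats 2000000 in
lemma key : ∀ (n : ℕ) (σ τ : List ℕ), IsPermList σ → τ.length ≤ n →
    (IsPermList τ ∨ τ = []) →
    ∑ z ∈ pattInterval σ τ, fval σ z = if σ = τ then 1 else 0 := by
  intro n
  induction n with
  | zero =>
    intro σ τ hσ hn hτ
    have hτnil : τ = [] := by
      rcases hτ with h | h
      · have := perm_len_pos h
        omega
      · exact h
    subst hτnil
    rw [pattInterval_nil hσ, Finset.sum_empty, if_neg (fun he => hσ.1 he)]
  | succ m ih =>
    intro σ τ hσ hn hτ
    rcases hτ with hτ | rfl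
    swap
    · rw [pattInterval_nil hσ, Finset.sum_empty, if_neg (fun he => hσ.1 he)]
    by_cases hle : PattLE σ τ
    swap
    · rw [pattInterval_not_le hσ hle, Finset.sum_empty,
        if_neg (fun he => hle (by rw [← he] at hle ⊢; exact pattLE_refl_perm hσ))]
    by_cases heq : σ = τ
    · subst heq
      rw [pattInterval_self hσ, Finset.sum_singleton, if_pos rfl, fval_self]
    -- main case
    rw [if_neg heq]
    have hkd : σ.length < τ.length := by
      have h1 := pattLE_length hle
      rcases Nat.lt_or_ge σ.length τ.length with h | h
      · exact h
      · exfalso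
        apply heq
        have := pattLE_eq_of_length hle (by omega)
        rwa [stdize_of_perm hτ] at this
    have hk1 : 1 ≤ σ.length := perm_len_pos hσ
    have hd2 : 2 ≤ τ.length := by omega
    have hndτ := perm_nodup hτ
    have hdLne : τ.dropLast ≠ [] := by
      intro he
      have := congrArg List.length he
      simp at this
      omega
    have htLne : τ.tail ≠ [] := by
      intro he
      have := congrArg List.length he
      simp at this
      omega
    have hPperm : IsPermList (stdize τ.dropLast) :=
      isPermList_stdize hdLne ((List.dropLast_sublist τ).nodup hndτ)
    have hSperm : IsPermList (stdize τ.tail) :=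
      isPermList_stdize htLne ((List.tail_sublist τ).nodup hndτ)
    have heLe := extLen_le τ
    have heGe : 1 ≤ extLen τ := extLen_pos hd2
    have hXne : τ.take (extLen τ) ≠ [] := by
      intro he
      have h9 : (τ.take (extLen τ)).length = 0 := by rw [he]; rfl
      rw [List.length_take] at h9
      omega
    have hXperm : IsPermList (pattExterior τ) :=
      isPermList_stdize hXne ((List.take_sublist _ _).nodup hndτ)
    have hIperm : IsPermList (pattInterior τ) ∨ pattInterior τ = [] := by
      by_cases hint : τ.tail.dropLast = []
      · right
        rw [pattInterior, hint, stdize_nil]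
      · left
        exact isPermList_stdize hint
          (((List.dropLast_sublist _).trans (List.tail_sublist τ)).nodup hndτ)
    have hlP : (stdize τ.dropLast).length = τ.length - 1 := by
      rw [stdize_length, List.length_dropLast]
    have hlS : (stdize τ.tail).length = τ.length - 1 := by
      rw [stdize_length, List.length_tail]
    have hlI : (pattInterior τ).length = τ.length - 2 := by
      rw [pattInterior, stdize_length, List.length_dropLast, List.length_tail]
      omega
    have hlX : (pattExterior τ).length = extLen τ := exterior_length τ
    -- decomposition 1
    have hdecomp : pattInterval σ τ
        = insert τ (pattInterval σ (stdize τ.dropLast) ∪ pattInterval σ (stdize τ.tail)) := by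
      ext z
      rw [mem_pattInterval, Finset.mem_insert, Finset.mem_union, mem_pattInterval,
        mem_pattInterval]
      constructor
      · rintro ⟨h1, h2⟩
        by_cases hzl : z.length = τ.length
        · left
          have := pattLE_eq_of_length h1 hzl
          rwa [stdize_of_perm hτ] at this
        · right
          have hlt : z.length < τ.length := lt_of_le_of_ne (pattLE_length h1) hzl
          rcases pattLE_split hτ h1 hlt with h | h
          · exact Or.inl ⟨h, h2⟩
          · exact Or.inr ⟨h, h2⟩
      · rintro (rfl | (⟨h1, h2⟩ | ⟨h1, h2⟩))
        · exact ⟨pattLE_refl_perm hτ, hle⟩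
        · exact ⟨pattLE_trans h1 (pattLE_P_self hτ), h2⟩
        · exact ⟨pattLE_trans h1 (pattLE_S_self hτ), h2⟩
    have hτnotin : τ ∉ pattInterval σ (stdize τ.dropLast) ∪ pattInterval σ (stdize τ.tail) := by
      rw [Finset.mem_union, mem_pattInterval, mem_pattInterval]
      rintro (⟨h1, _⟩ | ⟨h1, _⟩) <;> (have := pattLE_length h1; omega)
    -- decomposition 2
    have hcap : pattInterval σ (stdize τ.dropLast) ∩ pattInterval σ (stdize τ.tail)
        = pattInterval σ (pattExterior τ) ∪ pattInterval σ (pattInterior τ) := by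
      ext z
      rw [Finset.mem_inter, Finset.mem_union, mem_pattInterval, mem_pattInterval,
        mem_pattInterval, mem_pattInterval]
      constructor
      · rintro ⟨⟨h1, h2⟩, ⟨h3, _⟩⟩
        rcases pattLE_PS_cases hτ.1 h1 h3 with h | h
        · exact Or.inl ⟨h, h2⟩
        · exact Or.inr ⟨h, h2⟩
      · rintro (⟨h1, h2⟩ | ⟨h1, h2⟩)
        · exact ⟨⟨pattLE_trans h1 pattLE_X_P, h2⟩, pattLE_trans h1 (pattLE_X_S hτ.1), h2⟩
        · exact ⟨⟨pattLE_trans h1 pattLE_I_P, h2⟩, pattLE_trans h1 pattLE_I_S, h2⟩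
    -- sums by induction hypothesis
    have sumP := ih σ (stdize τ.dropLast) hσ (by rw [hlP]; omega) (Or.inl hPperm)
    have sumS := ih σ (stdize τ.tail) hσ (by rw [hlS]; omega) (Or.inl hSperm)
    have sumX := ih σ (pattExterior τ) hσ (by rw [hlX]; omega) (Or.inl hXperm)
    have sumI := ih σ (pattInterior τ) hσ (by rw [hlI]; omega) hIperm
    rw [hdecomp, Finset.sum_insert hτnotin]
    have htot := Finset.sum_union_inter (s₁ := pattInterval σ (stdize τ.dropLast))
      (s₂ := pattInterval σ (stdize τ.tail)) (f := fun z => fval σ z)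
    rw [hcap] at htot
    have htot2 := Finset.sum_union_inter (s₁ := pattInterval σ (pattExterior τ))
      (s₂ := pattInterval σ (pattInterior τ)) (f := fun z => fval σ z)
    -- dP = dS = 0 when the gap is at least 2, dI = 0 when gap ≠ 2, etc.
    by_cases hXI : PattLE (pattExterior τ) (pattInterior τ)
    · -- exterior below interior
      have hsub : pattInterval σ (pattExterior τ) ∩ pattInterval σ (pattInterior τ)
          = pattInterval σ (pattExterior τ) := by
        rw [Finset.inter_eq_left]
        intro z hz
        rw [mem_pattInterval] at hz ⊢
        exact ⟨pattLE_trans hz.1 hXI, hz.2⟩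
      rw [hsub] at htot2
      have heSmall : extLen τ ≤ τ.length - 2 := by
        have := pattLE_length hXI
        omega
      have hnotmono : ¬ MonotoneList τ := by
        intro hm
        have h1 := PS_of_mono hm
        have := (extLen_eq_top_iff hτ.1).2 h1
        omega
      -- three regimes
      rcases Nat.lt_or_ge (τ.length - σ.length) 2 with hgap | hgap
      · -- gap = 1
        have hgap1 : τ.length - σ.length = 1 := by omega
        have hfv : fval σ τ = -1 := by
          rw [fval, dif_pos (by omega), hgap1]
          simp
        have hPnS : σ = stdize τ.dropLast ∨ σ = stdize τ.tail :=
          coatom_cases hle (by omega)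
        have hPneS : stdize τ.dropLast ≠ stdize τ.tail := by
          intro he
          have := (extLen_eq_top_iff hτ.1).2 he
          omega
        have hIne : (if σ = pattInterior τ then (1:ℤ) else 0) = 0 := by
          rw [if_neg]
          intro he
          have := congrArg List.length he
          omega
        rw [hIne] at sumI
        rcases hPnS with h | h
        · rw [if_pos h] at sumP
          rw [if_neg (fun h2 => hPneS (h.symm.trans h2))] at sumS
          rw [hfv]
          linarith [htot, htot2, sumP, sumS, sumX, sumI]
        · rw [if_pos h] at sumS
          rw [if_neg (fun h2 => hPneS (h2.symm.trans h))] at sumP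
          rw [hfv]
          linarith [htot, htot2, sumP, sumS, sumX, sumI]
      · rcases Nat.lt_or_ge (τ.length - σ.length) 3 with hgap2 | hgap2
        · -- gap = 2
          have hgap2' : τ.length - σ.length = 2 := by omega
          have hXeqI : σ = pattExterior τ → σ = pattInterior τ := by
            intro he
            have hlen : (pattExterior τ).length = (pattInterior τ).length := by
              have := congrArg List.length he
              omega
            have := pattLE_eq_of_length hXI hlen
            rw [stdize_fix_interior] at this
            rw [he, this]
          have hfv : fval σ τ = if σ = pattInterior τ then 1 else 0 := by
            rw [fval, dif_neg (by omega), if_pos hgap2']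
            by_cases hi : σ = pattInterior τ
            · rw [if_pos ⟨hnotmono, Or.inl hi⟩, if_pos hi]
            · rw [if_neg, if_neg hi]
              rintro ⟨-, (h | h)⟩
              · exact hi h
              · exact hi (hXeqI h)
          have hPs : (if σ = stdize τ.dropLast then (1:ℤ) else 0) = 0 := by
            rw [if_neg]
            intro he
            have := congrArg List.length he
            omega
          have hSs : (if σ = stdize τ.tail then (1:ℤ) else 0) = 0 := by
            rw [if_neg]
            intro he
            have := congrArg List.length he
            omega
          rw [hPs] at sumP
          rw [hSs] at sumS
          rw [hfv]
          by_cases hi : σ = pattInterior τ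
          · rw [if_pos hi] at sumI ⊢
            linarith [htot, htot2, sumP, sumS, sumX, sumI]
          · rw [if_neg hi] at sumI ⊢
            linarith [htot, htot2, sumP, sumS, sumX, sumI]
        · -- gap ≥ 3
          have hfv : fval σ τ = 0 := by
            rw [fval, dif_neg (by omega), if_neg (by omega), if_neg]
            rintro ⟨-, h⟩
            exact h hXI
          have hPs : (if σ = stdize τ.dropLast then (1:ℤ) else 0) = 0 := by
            rw [if_neg]
            intro he
            have := congrArg List.length he
            omega
          have hSs : (if σ = stdize τ.tail then (1:ℤ) else 0) = 0 := by
            rw [if_neg]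
            intro he
            have := congrArg List.length he
            omega
          have hIs : (if σ = pattInterior τ then (1:ℤ) else 0) = 0 := by
            rw [if_neg]
            intro he
            have := congrArg List.length he
            omega
          rw [hPs] at sumP
          rw [hSs] at sumS
          rw [hIs] at sumI
          rw [hfv]
          linarith [htot, htot2, sumP, sumS, sumX, sumI]
    · -- exterior not below interior
      have herase : pattInterval σ (pattExterior τ) ∩ pattInterval σ (pattInterior τ)
          = (pattInterval σ (pattExterior τ)).erase (pattExterior τ) := by
        ext z
        rw [Finset.mem_inter, Finset.mem_erase, mem_pattInterval, mem_pattInterval]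
        constructor
        · rintro ⟨⟨h1, h2⟩, ⟨h3, -⟩⟩
          refine ⟨fun he => hXI (by rw [← he]; exact h3), h1, h2⟩
        · rintro ⟨hne, h1, h2⟩
          refine ⟨⟨h1, h2⟩, ?_, h2⟩
          by_contra h3
          exact hne (bifix_eq hτ.1 hXI h1 h3)
      rw [herase] at htot2
      -- value of the sum over the erased set
      have hXsum : ∑ z ∈ (pattInterval σ (pattExterior τ)).erase (pattExterior τ), fval σ z
          = (if σ = pattExterior τ then 1 else 0)
            - (if PattLE σ (pattExterior τ) then fval σ (pattExterior τ) else 0) := by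
        by_cases hσX : PattLE σ (pattExterior τ)
        · have hXmem : pattExterior τ ∈ pattInterval σ (pattExterior τ) :=
            mem_pattInterval.2 ⟨pattLE_refl_perm hXperm, hσX⟩
          rw [Finset.sum_erase_eq_sub hXmem, sumX, if_pos hσX]
        · rw [pattInterval_not_le hσ hσX, Finset.erase_empty, Finset.sum_empty,
            if_neg hσX, if_neg (show ¬ σ = pattExterior τ from
              fun he => hσX (by rw [← he]; exact pattLE_refl_perm hσ))]
          ring
      rw [hXsum] at htot2
      rcases Nat.lt_or_ge (τ.length - σ.length) 2 with hgap | hgap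
      · -- gap = 1
        have hgap1 : τ.length - σ.length = 1 := by omega
        have hfv : fval σ τ = -1 := by
          rw [fval, dif_pos (by omega), hgap1]
          simp
        have hPnS : σ = stdize τ.dropLast ∨ σ = stdize τ.tail :=
          coatom_cases hle (by omega)
        have hIs : (if σ = pattInterior τ then (1:ℤ) else 0) = 0 := by
          rw [if_neg]
          intro he
          have := congrArg List.length he
          omega
        rw [hIs] at sumI
        by_cases hPS : stdize τ.dropLast = stdize τ.tail
        · have heTop : extLen τ = τ.length - 1 := (extLen_eq_top_iff hτ.1).2 hPS
          have hXP : pattExterior τ = stdize τ.dropLast := by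
            rw [pattExterior, heTop, ← List.dropLast_eq_take]
          have hσP : σ = stdize τ.dropLast := by
            rcases hPnS with h | h
            · exact h
            · exact h.trans hPS.symm
          have hσX : σ = pattExterior τ := by rw [hXP]; exact hσP
          have hple : PattLE σ (pattExterior τ) := by
            rw [hσX]
            exact pattLE_refl_perm hXperm
          have hfX : fval σ (pattExterior τ) = 1 := by rw [← hσX]; exact fval_self
          rw [if_pos hσX, if_pos hple, hfX] at htot2
          rw [if_pos hσP] at sumP
          rw [if_pos (hσP.trans hPS)] at sumS
          rw [if_pos hσX] at sumX
          rw [hfv]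
          linarith [htot, htot2, sumP, sumS, sumX, sumI]
        · have heSmall : extLen τ ≤ τ.length - 2 := by
            have h1 : extLen τ ≠ τ.length - 1 := fun he => hPS ((extLen_eq_top_iff hτ.1).1 he)
            omega
          have hσXne : ¬ PattLE σ (pattExterior τ) := by
            intro h
            have := pattLE_length h
            omega
          have hXs : (if σ = pattExterior τ then (1:ℤ) else 0) = 0 := by
            rw [if_neg (show ¬ σ = pattExterior τ from
              fun he => hσXne (by rw [← he]; exact pattLE_refl_perm hσ))]
          rw [if_neg hσXne, hXs] at htot2
          rcases hPnS with h | h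
          · rw [if_pos h] at sumP
            rw [if_neg (fun h2 => hPS (h.symm.trans h2))] at sumS
            rw [hXs] at sumX
            rw [hfv]
            linarith [htot, htot2, sumP, sumS, sumI]
          · rw [if_pos h] at sumS
            rw [if_neg (fun h2 => hPS (h2.symm.trans h))] at sumP
            rw [hXs] at sumX
            rw [hfv]
            linarith [htot, htot2, sumP, sumS, sumI]
      · rcases Nat.lt_or_ge (τ.length - σ.length) 3 with hgap2 | hgap2
        · -- gap = 2
          have hgap2' : τ.length - σ.length = 2 := by omega
          have hPs : (if σ = stdize τ.dropLast then (1:ℤ) else 0) = 0 := by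
            rw [if_neg]
            intro he
            have := congrArg List.length he
            omega
          have hSs : (if σ = stdize τ.tail then (1:ℤ) else 0) = 0 := by
            rw [if_neg]
            intro he
            have := congrArg List.length he
            omega
          rw [hPs] at sumP
          rw [hSs] at sumS
          by_cases hm : MonotoneList τ
          · -- monotone
            have hPS : stdize τ.dropLast = stdize τ.tail := PS_of_mono hm
            have heTop : extLen τ = τ.length - 1 := (extLen_eq_top_iff hτ.1).2 hPS
            have hσI : σ = pattInterior τ := mono_sigma_I hm hle (by omega)
            have hσX : PattLE σ (pattExterior τ) := by
              rw [mono_pattern_unique hm hle, pattExterior]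
              exact pattLE_take_take (by omega)
            have hfX : fval σ (pattExterior τ) = -1 := by
              rw [fval, dif_pos (by omega)]
              rw [show (pattExterior τ).length - σ.length = 1 by omega, pow_one]
            have hfv : fval σ τ = 0 := by
              rw [fval, dif_neg (by omega), if_pos hgap2', if_neg]
              rintro ⟨hnm, -⟩
              exact hnm hm
            rw [if_pos hσX, hfX] at htot2
            rw [if_pos hσI] at sumI
            rw [hfv]
            linarith [htot, htot2, sumP, sumS, sumX, sumI]
          · -- not monotone
            have hIpermP : IsPermList (pattInterior τ) := by
              rcases hIperm with h | h
              · exact h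
              · exfalso
                have := congrArg List.length h
                rw [hlI] at this
                simp at this
                omega
            have hXiff : PattLE σ (pattExterior τ) → σ = pattExterior τ := by
              intro h
              have hlen := pattLE_length h
              have hene : extLen τ ≠ τ.length - 1 := by
                intro he
                exact hm (mono_of_PS hndτ ((extLen_eq_top_iff hτ.1).1 he))
              have h2 : σ = stdize (pattExterior τ) := pattLE_eq_of_length h (by omega)
              rwa [stdize_fix_exterior] at h2
            have hIX : ¬ (σ = pattInterior τ ∧ σ = pattExterior τ) := by
              rintro ⟨h1, h2⟩
              apply hXI
              rw [← h2, h1]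
              exact pattLE_refl_perm (by rw [← h1]; exact hσ)
            have hfv : fval σ τ = (if σ = pattInterior τ then (1:ℤ) else 0)
                + (if σ = pattExterior τ then (1:ℤ) else 0) := by
              rw [fval, dif_neg (by omega), if_pos hgap2']
              by_cases h1 : σ = pattInterior τ
              · rw [if_pos ⟨hm, Or.inl h1⟩, if_pos h1, if_neg (fun h2 => hIX ⟨h1, h2⟩)]
                norm_num
              · by_cases h2 : σ = pattExterior τ
                · rw [if_pos ⟨hm, Or.inr h2⟩, if_neg h1, if_pos h2]
                  norm_num
                · rw [if_neg (show ¬ (¬ MonotoneList τ ∧ (σ = pattInterior τ ∨ σ = pattExterior τ))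
                      from fun hc => hc.2.elim h1 h2), if_neg h1, if_neg h2]
                  norm_num
            have heX : (if PattLE σ (pattExterior τ) then fval σ (pattExterior τ) else 0)
                = (if σ = pattExterior τ then (1:ℤ) else 0) := by
              by_cases h : PattLE σ (pattExterior τ)
              · have h2 := hXiff h
                rw [if_pos h, if_pos h2, ← h2, fval_self]
              · rw [if_neg h, if_neg (show ¬ σ = pattExterior τ from
                  fun he => h (by rw [← he]; exact pattLE_refl_perm hσ))]
            rw [heX] at htot2
            rw [hfv]
            linarith [htot, htot2, sumP, sumS, sumX, sumI]
        · -- gap ≥ 3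
          have hPs : (if σ = stdize τ.dropLast then (1:ℤ) else 0) = 0 := by
            rw [if_neg]
            intro he
            have := congrArg List.length he
            omega
          have hSs : (if σ = stdize τ.tail then (1:ℤ) else 0) = 0 := by
            rw [if_neg]
            intro he
            have := congrArg List.length he
            omega
          have hIs : (if σ = pattInterior τ then (1:ℤ) else 0) = 0 := by
            rw [if_neg]
            intro he
            have := congrArg List.length he
            omega
          have hfv : fval σ τ
              = if PattLE σ (pattExterior τ) then fval σ (pattExterior τ) else 0 := by
            rw [fval, dif_neg (by omega), if_neg (by omega)]
            by_cases hσX : PattLE σ (pattExterior τ)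
            · rw [if_pos ⟨hσX, hXI⟩, if_pos hσX]
            · rw [if_neg (fun hc => hσX hc.1), if_neg hσX]
          rw [hPs] at sumP
          rw [hSs] at sumS
          rw [hIs] at sumI
          rw [hfv]
          linarith [htot, htot2, sumP, sumS, sumI]

open List

lemma mu_eq_fval (μ : List ℕ → List ℕ → ℤ)
    (hμ : ∀ σ τ : List ℕ, IsPermList σ → IsPermList τ → PattLE σ τ →
      ∑ z ∈ pattInterval σ τ, μ σ z = if σ = τ then 1 else 0) :
    ∀ (n : ℕ) (σ τ : List ℕ), IsPermList σ → IsPermList τ → τ.length ≤ n → PattLE σ τ →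
      μ σ τ = fval σ τ := by
  intro n
  induction n with
  | zero =>
    intro σ τ hσ hτ hn hle
    exact absurd hn (by have := perm_len_pos hτ; omega)
  | succ m ih =>
    intro σ τ hσ hτ hn hle
    have hτmem : τ ∈ pattInterval σ τ := mem_pattInterval.2 ⟨pattLE_refl_perm hτ, hle⟩
    have h1 := hμ σ τ hσ hτ hle
    have h2 := key (m + 1) σ τ hσ hn (Or.inl hτ)
    have hsplit : ∀ z ∈ (pattInterval σ τ).erase τ, μ σ z = fval σ z := by
      intro z hz
      rw [Finset.mem_erase] at hz
      obtain ⟨hzne, hzmem⟩ := hz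
      have hzperm := mem_pattInterval_perm hσ hτ hzmem
      rw [mem_pattInterval] at hzmem
      have hzlen : z.length < τ.length := by
        have hzl := pattLE_length hzmem.1
        rcases Nat.lt_or_ge z.length τ.length with h | h
        · exact h
        · exfalso
          apply hzne
          have := pattLE_eq_of_length hzmem.1 (by omega)
          rwa [stdize_of_perm hτ] at this
      exact ih σ z hσ hzperm (by omega) hzmem.2
    have e1 : ∑ z ∈ (pattInterval σ τ).erase τ, μ σ z
        = ∑ z ∈ (pattInterval σ τ).erase τ, fval σ z := Finset.sum_congr rfl hsplit
    have e2 := Finset.sum_erase_eq_sub (f := fun z => μ σ z) hτmem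
    have e3 := Finset.sum_erase_eq_sub (f := fun z => fval σ z) hτmem
    linarith [e1, e2, e3, h1, h2]

/-- Theorem (Bernini–Ferrari–Steingrímsson): the Möbius function of the consecutive
pattern poset.  Here `μ` is any function satisfying the defining recursion of the
Möbius function of this (locally finite) poset. -/
theorem mobius_consecutive_pattern_poset
    (μ : List ℕ → List ℕ → ℤ)
    (hμ : ∀ σ τ : List ℕ, IsPermList σ → IsPermList τ → PattLE σ τ →
      ∑ z ∈ pattInterval σ τ, μ σ z = if σ = τ then 1 else 0) :
    ∀ σ τ : List ℕ, IsPermList σ → IsPermList τ → PattLE σ τ →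
      ((2 < τ.length - σ.length ∧ PattLE σ (pattExterior τ) ∧
          ¬ PattLE (pattExterior τ) (pattInterior τ) →
          μ σ τ = μ σ (pattExterior τ)) ∧
       (τ.length - σ.length = 2 ∧ ¬ MonotoneList τ ∧
          (σ = pattInterior τ ∨ σ = pattExterior τ) →
          μ σ τ = 1) ∧
       (τ.length - σ.length < 2 → μ σ τ = (-1) ^ (τ.length - σ.length)) ∧
       (¬ (2 < τ.length - σ.length ∧ PattLE σ (pattExterior τ) ∧
            ¬ PattLE (pattExterior τ) (pattInterior τ)) →
        ¬ (τ.length - σ.length = 2 ∧ ¬ MonotoneList τ ∧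
            (σ = pattInterior τ ∨ σ = pattExterior τ)) →
        ¬ (τ.length - σ.length < 2) →
        μ σ τ = 0)) := by
  intro σ τ hσ hτ hle
  have hk1 : 1 ≤ σ.length := perm_len_pos hσ
  have hkd : σ.length ≤ τ.length := pattLE_length hle
  have hmain : μ σ τ = fval σ τ := mu_eq_fval μ hμ τ.length σ τ hσ hτ le_rfl hle
  refine ⟨?_, ?_, ?_, ?_⟩
  · rintro ⟨hgap, hσX, hXI⟩
    have hd2 : 2 ≤ τ.length := by omega
    have hXperm : IsPermList (pattExterior τ) := by
      apply isPermList_stdize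
      · intro he
        have h9 : (τ.take (extLen τ)).length = 0 := by rw [he]; rfl
        rw [List.length_take] at h9
        have := extLen_pos hd2
        omega
      · exact (List.take_sublist _ _).nodup (perm_nodup hτ)
    have hX : μ σ (pattExterior τ) = fval σ (pattExterior τ) :=
      mu_eq_fval μ hμ (pattExterior τ).length σ _ hσ hXperm le_rfl hσX
    rw [hmain, hX, fval, dif_neg (by omega), if_neg (by omega), if_pos ⟨hσX, hXI⟩]
  · rintro ⟨hgap, hnm, hσi⟩
    rw [hmain, fval, dif_neg (by omega), if_pos hgap, if_pos ⟨hnm, hσi⟩]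
  · intro hgap
    rw [hmain, fval, dif_pos hgap]
  · intro h1 h2 h3
    rw [hmain, fval, dif_neg h3]
    by_cases hg2 : τ.length - σ.length = 2
    · rw [if_pos hg2, if_neg]
      intro hc
      exact h2 ⟨hg2, hc.1, hc.2⟩
    · rw [if_neg hg2, if_neg]
      intro hc
      exact h1 ⟨by omega, hc.1, hc.2⟩

end MobiusAux
end

section
/- Let τ ∈ S_d be non-monotone and let σ ≤ τ with |τ| − |σ| = 2, σ ≠ i(τ), and σ ≠ x(τ). Then the open interval (σ, τ) in the consecutive pattern poset contains exactly one element, and consequently μ(σ,τ) = 0. -/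
namespace PattAux


def rk (l : List ℕ) (x : ℕ) : ℕ := (l.filter (· ≤ x)).length

lemma stdize_eq_map (l : List ℕ) : stdize l = l.map (rk l) := rfl

lemma length_stdize (l : List ℕ) : (stdize l).length = l.length := by
  simp [stdize]

lemma filter_length_mono {p q : ℕ → Bool} (l : List ℕ) (h : ∀ a ∈ l, p a → q a) :
    (l.filter p).length ≤ (l.filter q).length := by
  induction l with
  | nil => simp
  | cons a t ih =>
    have ht : (t.filter p).length ≤ (t.filter q).length :=
      ih (fun x hx => h x (List.mem_cons_of_mem _ hx))
    by_cases hp : p a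
    · have hq : q a := h a List.mem_cons_self hp
      simp [List.filter_cons, hp, hq]; omega
    · by_cases hq : q a <;> simp [List.filter_cons, hp, hq] <;> omega

lemma rk_lt_rk {l : List ℕ} {x y : ℕ} (hy : y ∈ l) (hxy : x < y) : rk l x < rk l y := by
  obtain ⟨s, t, rfl⟩ := List.append_of_mem hy
  unfold rk
  have hyx : ¬ (y ≤ x) := by omega
  have h1 : ∀ a ∈ s, (decide (a ≤ x)) → (decide (a ≤ y)) := by
    intro a _ ha; simp at ha ⊢; omega
  have h2 : ∀ a ∈ t, (decide (a ≤ x)) → (decide (a ≤ y)) := by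
    intro a _ ha; simp at ha ⊢; omega
  have m1 := filter_length_mono s h1
  have m2 := filter_length_mono t h2
  simp only [List.filter_append, List.filter_cons, List.length_append, decide_eq_true_eq,
    hyx, if_false, le_refl, if_true, List.length_cons]
  omega

lemma rk_lt_iff {l : List ℕ} {x y : ℕ} (hx : x ∈ l) (hy : y ∈ l) :
    rk l x < rk l y ↔ x < y := by
  constructor
  · intro h
    rcases lt_trichotomy x y with h' | rfl | h'
    · exact h'
    · omega
    · exact absurd (rk_lt_rk hx h') (by omega)
  · exact fun h => rk_lt_rk hy h

lemma rk_inj {l : List ℕ} {x y : ℕ} (hx : x ∈ l) (hy : y ∈ l) (h : rk l x = rk l y) :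
    x = y := by
  rcases lt_trichotomy x y with h' | h' | h'
  · exact absurd (rk_lt_rk hy h') (by omega)
  · exact h'
  · exact absurd (rk_lt_rk hx h') (by omega)

lemma stdize_map_of_mono {l : List ℕ} {f : ℕ → ℕ}
    (hf : ∀ x ∈ l, ∀ y ∈ l, x < y → f x < f y) :
    stdize (l.map f) = stdize l := by
  show (l.map f).map (rk (l.map f)) = l.map (rk l)
  rw [List.map_map]
  apply List.map_congr_left
  intro x hx
  show rk (l.map f) (f x) = rk l x
  unfold rk
  rw [List.filter_map, List.length_map]
  congr 1
  apply List.filter_congr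
  intro a ha
  have hiff : f a ≤ f x ↔ a ≤ x := by
    constructor
    · intro h
      by_contra hc
      have : f x < f a := hf x hx a ha (by omega)
      omega
    · intro h
      rcases Nat.lt_or_ge a x with h' | h'
      · exact le_of_lt (hf a ha x hx h')
      · have : a = x := by omega
        subst this; rfl
  simp [Function.comp, hiff]

lemma stdize_stdize (l : List ℕ) : stdize (stdize l) = stdize l := by
  rw [stdize_eq_map l]
  exact stdize_map_of_mono (fun x _ y hy hxy => rk_lt_rk hy hxy)

lemma mem_infixes {w l : List ℕ} : w ∈ infixes l ↔ w <:+: l := by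
  simp only [infixes, List.mem_flatMap, List.mem_inits, List.mem_tails]
  constructor
  · rintro ⟨p, hp, hw⟩
    obtain ⟨u, rfl⟩ := hp
    obtain ⟨v, rfl⟩ := hw
    exact ⟨v, u, by simp⟩
  · rintro ⟨s, t, rfl⟩
    exact ⟨s ++ w, ⟨t, by simp⟩, s, rfl⟩

lemma pattLE_iff {σ τ : List ℕ} : PattLE σ τ ↔ ∃ w, w <:+: τ ∧ stdize w = σ := by
  simp only [PattLE, List.mem_map, mem_infixes]

lemma pattLE_stdize_of_infix {v w : List ℕ} (h : v <:+: w) :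
    PattLE (stdize v) (stdize w) := by
  rw [pattLE_iff]
  refine ⟨v.map (rk w), ?_, ?_⟩
  · rw [stdize_eq_map w]; exact h.map _
  · exact stdize_map_of_mono (fun x _ y hy hxy => rk_lt_rk (h.subset hy) hxy)

lemma pattLE_refl {σ : List ℕ} (h : stdize σ = σ) : PattLE σ σ :=
  pattLE_iff.2 ⟨σ, List.infix_refl σ, h⟩

lemma exists_infix_of_pattLE_stdize {σ w : List ℕ} (h : PattLE σ (stdize w)) :
    ∃ v, v <:+: w ∧ stdize v = σ := by
  rw [pattLE_iff] at h
  obtain ⟨u, hu, rfl⟩ := h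
  rw [stdize_eq_map w] at hu
  obtain ⟨s, t, he⟩ := hu
  have h1 : ((w.map (rk w)).drop s.length).take u.length = u := by
    rw [← he, List.append_assoc, List.drop_left, List.take_left]
  set v := (w.drop s.length).take u.length with hv
  have h2 : v.map (rk w) = u := by
    rw [hv, List.map_take, List.map_drop, h1]
  have hvi : v <:+: w :=
    ((List.take_prefix _ _).isInfix).trans (List.drop_suffix _ _).isInfix
  refine ⟨v, hvi, ?_⟩
  rw [← h2]
  exact (stdize_map_of_mono (fun x _ y hy hxy => rk_lt_rk (hvi.subset hy) hxy)).symm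

lemma pattLE_length {σ τ : List ℕ} (h : PattLE σ τ) : σ.length ≤ τ.length := by
  obtain ⟨w, hw, rfl⟩ := pattLE_iff.1 h
  rw [length_stdize]
  exact hw.length_le

lemma pattLE_eq_of_length {σ τ : List ℕ} (hτ : stdize τ = τ) (h : PattLE σ τ)
    (hl : τ.length ≤ σ.length) : σ = τ := by
  obtain ⟨w, hw, rfl⟩ := pattLE_iff.1 h
  rw [length_stdize] at hl
  rw [hw.eq_of_length (le_antisymm hw.length_le hl), hτ]

lemma stdize_perm_fix {l : List ℕ} (h : l.Perm (List.range' 1 l.length)) :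
    stdize l = l := by
  rw [stdize_eq_map]
  conv_rhs => rw [← List.map_id l]
  apply List.map_congr_left
  intro x hx
  show (l.filter (· ≤ x)).length = x
  have hx' : x ∈ List.range' 1 l.length := h.subset hx
  rw [List.mem_range'_1] at hx'
  rw [(h.filter (· ≤ x)).length_eq]
  have hsplit : List.range' 1 l.length =
      List.range' 1 x ++ List.range' (1 + x) (l.length - x) := by
    have h2 := List.range'_append (s := 1) (m := x) (n := l.length - x) (step := 1)
    rw [one_mul] at h2
    have h3 : x + (l.length - x) = l.length := by omega
    rw [h3] at h2
    exact h2.symm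
  rw [hsplit, List.filter_append]
  rw [List.filter_eq_self.2 (by intro a ha; rw [List.mem_range'_1] at ha; simp; omega),
    List.filter_eq_nil_iff.2 (by intro a ha; rw [List.mem_range'_1] at ha; simp; omega)]
  simp

lemma isPermList_stdize {l : List ℕ} (hne : l ≠ []) (hnd : l.Nodup) :
    IsPermList (stdize l) := by
  constructor
  · simp [stdize, hne]
  · rw [length_stdize]
    have hnd2 : (stdize l).Nodup := by
      rw [stdize_eq_map]
      exact List.Nodup.map_on (fun x hx y hy h => rk_inj hx hy h) hnd
    have hsub : stdize l ⊆ List.range' 1 l.length := by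
      intro z hz
      rw [stdize_eq_map, List.mem_map] at hz
      obtain ⟨x, hx, rfl⟩ := hz
      rw [List.mem_range'_1]
      constructor
      · have hmem : x ∈ l.filter (· ≤ x) := List.mem_filter.2 ⟨hx, by simp⟩
        have := List.length_pos_iff.2 (List.ne_nil_of_mem hmem)
        unfold rk; omega
      · have := List.length_filter_le (· ≤ x) l
        unfold rk; simp [List.length_range'] at *; omega
    refine (hnd2.subperm hsub).perm_of_length_le ?_
    rw [length_stdize]
    simp [List.length_range']

lemma infix_eq_drop_take {w l : List ℕ} (h : w <:+: l) :
    ∃ i, i + w.length ≤ l.length ∧ w = (l.drop i).take w.length := by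
  obtain ⟨s, t, rfl⟩ := h
  refine ⟨s.length, by simp, ?_⟩
  rw [List.append_assoc, List.drop_left, List.take_left]

lemma lt_iff_of_stdize_eq {a b : List ℕ} (h : stdize a = stdize b)
    (hab : a.length = b.length) {i j : ℕ} (hia : i < a.length) (hja : j < a.length) :
    a[i] < a[j] ↔ b[i]'(by omega) < b[j]'(by omega) := by
  have key : ∀ (k : ℕ) (hk : k < a.length), rk a a[k] = rk b (b[k]'(by omega)) := by
    intro k hk
    have h1 : (stdize a)[k]'(by rw [length_stdize]; omega) =
        (stdize b)[k]'(by rw [length_stdize]; omega) := by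
      congr 1
    simp only [stdize_eq_map, List.getElem_map] at h1
    exact h1
  rw [← rk_lt_iff (List.getElem_mem hia) (List.getElem_mem hja), key i hia, key j hja,
    rk_lt_iff (List.getElem_mem (by omega)) (List.getElem_mem (by omega))]

lemma monotone_of_overlap {τ : List ℕ} (hnd : τ.Nodup)
    (h : stdize (τ.take (τ.length - 1)) = stdize (τ.drop 1)) : MonotoneList τ := by
  rcases Nat.lt_or_ge τ.length 2 with hn | hn
  · left
    unfold List.Chain'
    rw [List.isChain_iff_getElem]
    intro i hi
    omega
  -- key: adjacent comparisons propagate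
  have hlen : (τ.take (τ.length - 1)).length = (τ.drop 1).length := by
    simp only [List.length_take, List.length_drop]; omega
  have key : ∀ (i : ℕ) (hi : i + 2 < τ.length),
      ((τ[i]'(by omega) < τ[i+1]'(by omega)) ↔ (τ[i+1]'(by omega) < τ[i+2]'(by omega))) := by
    intro i hi
    have h1 : i < (τ.take (τ.length - 1)).length := by
      simp only [List.length_take]; omega
    have h2 : i + 1 < (τ.take (τ.length - 1)).length := by
      simp only [List.length_take]; omega
    have := lt_iff_of_stdize_eq h hlen h1 h2
    rw [List.getElem_take, List.getElem_take, List.getElem_drop, List.getElem_drop] at this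
    simp only [show 1 + i = i + 1 from by omega, show 1 + (i + 1) = i + 2 from by omega] at this
    exact this
  have propag : ∀ (i : ℕ) (hi : i + 1 < τ.length),
      ((τ[i]'(by omega) < τ[i+1]'(by omega)) ↔ (τ[0]'(by omega) < τ[1]'(by omega))) := by
    intro i
    induction i with
    | zero => intro _; rfl
    | succ k ih =>
      intro hk
      have hk2 : k + 2 < τ.length := by omega
      exact (key k hk2).symm.trans (ih (by omega))
  have hne : ∀ i j (hi : i < τ.length) (hj : j < τ.length), i ≠ j → τ[i] ≠ τ[j] := by
    intro i j hi hj hij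
    exact fun hc => hij (List.Nodup.getElem_inj_iff hnd |>.1 hc)
  by_cases h01 : τ[0]'(by omega) < τ[1]'(by omega)
  · left
    unfold List.Chain'
    rw [List.isChain_iff_getElem]
    intro i hi
    exact (propag i (by omega)).2 h01
  · right
    unfold List.Chain'
    rw [List.isChain_iff_getElem]
    intro i hi
    have hne' := hne i (i+1) (by omega) (by omega) (by omega)
    have := (propag i (by omega)).not.2 h01
    simp only [not_lt] at this
    omega

lemma interior_eq (τ : List ℕ) : pattInterior τ = stdize ((τ.drop 1).take (τ.length - 2)) := by
  unfold pattInterior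
  rw [List.dropLast_eq_take, ← List.drop_one]
  congr 2
  simp only [List.length_drop]
  omega

lemma exterior_eq {τ : List ℕ} (hnd : τ.Nodup) (hmono : ¬ MonotoneList τ)
    (h3 : 3 ≤ τ.length)
    (h : stdize (τ.take (τ.length - 2)) = stdize (τ.drop 2)) :
    pattExterior τ = stdize (τ.take (τ.length - 2)) := by
  set P : ℕ → Prop := fun k => stdize (τ.take k) = stdize (τ.drop (τ.length - k)) with hP
  have hnot : ¬ P (τ.length - 1) := by
    intro hc
    apply hmono
    apply monotone_of_overlap hnd
    have e : τ.length - (τ.length - 1) = 1 := by omega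
    rw [hP] at hc
    rwa [e] at hc
  have hyes : P (τ.length - 2) := by
    have e : τ.length - (τ.length - 2) = 2 := by omega
    rw [hP]
    show stdize (τ.take (τ.length - 2)) = stdize (τ.drop (τ.length - (τ.length - 2)))
    rwa [e]
  have hle2 : extLen τ = τ.length - 2 := by
    show Nat.findGreatest P (τ.length - 1) = τ.length - 2
    have e1 : τ.length - 1 = (τ.length - 2) + 1 := by omega
    rw [e1, Nat.findGreatest_succ, if_neg (by rw [← e1]; exact hnot)]
    exact le_antisymm ((Nat.findGreatest_le _)) (Nat.le_findGreatest le_rfl hyes)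
  unfold pattExterior
  rw [hle2]


lemma mem_pattIntervalBase {τ z : List ℕ} :
    z ∈ ((infixes τ).map stdize).toFinset ↔ ∃ w, w <:+: τ ∧ stdize w = z := by
  rw [List.mem_toFinset, List.mem_map]
  simp only [mem_infixes]

lemma mem_pattInterval {σ τ z : List ℕ} :
    z ∈ pattInterval σ τ ↔ (∃ w, w <:+: τ ∧ stdize w = z) ∧ PattLE σ z := by
  rw [pattInterval, Finset.mem_filter, mem_pattIntervalBase]

lemma mem_openPattInterval {σ τ z : List ℕ} :
    z ∈ openPattInterval σ τ ↔
      (∃ w, w <:+: τ ∧ stdize w = z) ∧ PattLE σ z ∧ z ≠ σ ∧ z ≠ τ := by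
  rw [openPattInterval, Finset.mem_filter, mem_pattIntervalBase]

lemma pattInterval_self {σ : List ℕ} (hfix : stdize σ = σ) : pattInterval σ σ = {σ} := by
  ext z
  rw [mem_pattInterval, Finset.mem_singleton]
  constructor
  · rintro ⟨⟨w, hw, rfl⟩, hz⟩
    have h1 : σ.length ≤ w.length := by
      have := pattLE_length hz; rwa [length_stdize] at this
    rw [hw.eq_of_length (le_antisymm hw.length_le h1), hfix]
  · rintro rfl
    exact ⟨⟨_, List.infix_refl _, hfix⟩, pattLE_refl hfix⟩

lemma pattInterval_two {σ ρ : List ℕ} (hσfix : stdize σ = σ) (hρfix : stdize ρ = ρ)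
    (h : PattLE σ ρ) (hlen : σ.length + 1 = ρ.length) : pattInterval σ ρ = {σ, ρ} := by
  ext z
  rw [mem_pattInterval, Finset.mem_insert, Finset.mem_singleton]
  constructor
  · rintro ⟨⟨w, hw, rfl⟩, hz⟩
    have h1 : σ.length ≤ w.length := by
      have := pattLE_length hz; rwa [length_stdize] at this
    have h2 : w.length ≤ ρ.length := hw.length_le
    rcases Nat.eq_or_lt_of_le h2 with he | hlt
    · right; rw [hw.eq_of_length he, hρfix]
    · left
      refine (pattLE_eq_of_length (stdize_stdize w) hz ?_).symm
      rw [length_stdize]; omega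
  · rintro (rfl | rfl)
    · exact ⟨pattLE_iff.1 h, pattLE_refl hσfix⟩
    · exact ⟨⟨_, List.infix_refl _, hρfix⟩, h⟩

lemma intervals_eq {σ τ ρ : List ℕ} (hτfix : stdize τ = τ) (hσfix : stdize σ = σ)
    (hle : PattLE σ τ) (hlen : σ.length + 2 = τ.length)
    (hρ : ∃ w, w <:+: τ ∧ stdize w = ρ) (hρlen : ρ.length + 1 = τ.length)
    (hσρ : PattLE σ ρ)
    (huniq : ∀ w, w <:+: τ → w.length + 1 = τ.length → PattLE σ (stdize w) → stdize w = ρ) :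
    openPattInterval σ τ = {ρ} ∧ pattInterval σ τ = {σ, ρ, τ} := by
  have hρσ : ρ ≠ σ := fun e => by rw [e] at hρlen; omega
  have hρτ : ρ ≠ τ := fun e => by rw [e] at hρlen; omega
  have hστ : σ ≠ τ := fun e => by rw [e] at hlen; omega
  have hclass : ∀ z, (∃ w, w <:+: τ ∧ stdize w = z) → PattLE σ z →
      z = σ ∨ z = ρ ∨ z = τ := by
    rintro z ⟨w, hw, rfl⟩ hz
    have h1 : σ.length ≤ w.length := by
      have := pattLE_length hz; rwa [length_stdize] at this
    have h2 : w.length ≤ τ.length := hw.length_le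
    rcases show w.length = σ.length ∨ w.length + 1 = τ.length ∨ w.length = τ.length by omega
      with he | he | he
    · left
      exact (pattLE_eq_of_length (stdize_stdize w) hz (by rw [length_stdize]; omega)).symm
    · right; left; exact huniq w hw he hz
    · right; right; rw [hw.eq_of_length he, hτfix]
  constructor
  · ext z
    rw [mem_openPattInterval, Finset.mem_singleton]
    constructor
    · rintro ⟨hw, hz, hzσ, hzτ⟩
      rcases hclass z hw hz with rfl | rfl | rfl
      · exact absurd rfl hzσ
      · rfl
      · exact absurd rfl hzτ
    · rintro rfl
      exact ⟨hρ, hσρ, hρσ, hρτ⟩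
  · ext z
    rw [mem_pattInterval, Finset.mem_insert, Finset.mem_insert, Finset.mem_singleton]
    constructor
    · rintro ⟨hw, hz⟩; exact hclass z hw hz
    · rintro (rfl | rfl | rfl)
      · exact ⟨pattLE_iff.1 hle, pattLE_refl hσfix⟩
      · exact ⟨hρ, hσρ⟩
      · exact ⟨⟨_, List.infix_refl _, hτfix⟩, hle⟩

end PattAux

/-- If `τ` is not monotone, `σ ≤ τ` with `|τ| − |σ| = 2`, and `σ` is neither `i(τ)`
nor `x(τ)`, then the open interval `(σ,τ)` contains exactly one element, and
consequently `μ(σ,τ) = 0`.  Here `μ` is any function satisfying the defining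
recursion of the Möbius function. -/

theorem not_monotone_open_interval_card_one
    (μ : List ℕ → List ℕ → ℤ)
    (hμ : ∀ σ τ : List ℕ, IsPermList σ → IsPermList τ → PattLE σ τ →
      ∑ z ∈ pattInterval σ τ, μ σ z = if σ = τ then 1 else 0)
    (σ τ : List ℕ) (hσ : IsPermList σ) (hτ : IsPermList τ)
    (hmono : ¬ MonotoneList τ) (hle : PattLE σ τ) (hlen : σ.length + 2 = τ.length)
    (hi : σ ≠ pattInterior τ) (hx : σ ≠ pattExterior τ) :
    (openPattInterval σ τ).card = 1 ∧ μ σ τ = 0 := by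
  classical
  obtain ⟨hσne, hσperm⟩ := hσ
  obtain ⟨hτne, hτperm⟩ := hτ
  have hndτ : τ.Nodup := hτperm.nodup_iff.2 (List.nodup_range')
  have hτfix : stdize τ = τ := PattAux.stdize_perm_fix hτperm
  have hσfix : stdize σ = σ := PattAux.stdize_perm_fix hσperm
  have hσpos : 0 < σ.length := List.length_pos_iff.2 hσne
  have hd3 : 3 ≤ τ.length := by omega
  have hcase : σ = stdize (τ.take (τ.length - 2)) ∨ σ = stdize (τ.drop 2) := by
    obtain ⟨w₀, hw₀, hw₀σ⟩ := PattAux.pattLE_iff.1 hle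
    have hw₀len : w₀.length = τ.length - 2 := by
      rw [← PattAux.length_stdize w₀, hw₀σ]; omega
    obtain ⟨i0, hi0le, hi0⟩ := PattAux.infix_eq_drop_take hw₀
    have hi02 : i0 ≤ 2 := by omega
    interval_cases i0
    · left
      rw [← hw₀σ, hi0, List.drop_zero, hw₀len]
    · exfalso
      apply hi
      rw [PattAux.interior_eq, ← hw₀σ, hi0, hw₀len]
    · right
      have : (τ.drop 2).take w₀.length = τ.drop 2 :=
        List.take_of_length_le (by rw [List.length_drop]; omega)
      rw [← hw₀σ, hi0, this]
  have key : ∃ ρ, (∃ w, w <:+: τ ∧ stdize w = ρ) ∧ ρ.length + 1 = τ.length ∧ PattLE σ ρ ∧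
      openPattInterval σ τ = {ρ} ∧ pattInterval σ τ = {σ, ρ, τ} := by
    rcases hcase with hA | hB
    · -- σ is the prefix pattern
      have hnS : ¬ PattLE σ (stdize (τ.drop 1)) := by
        intro hc
        obtain ⟨v, hv, hvσ⟩ := PattAux.exists_infix_of_pattLE_stdize hc
        have hvlen : v.length = τ.length - 2 := by
          rw [← PattAux.length_stdize v, hvσ]; omega
        obtain ⟨j, hjle, hj⟩ := PattAux.infix_eq_drop_take hv
        rw [List.length_drop] at hjle
        have hj1 : j ≤ 1 := by omega
        interval_cases j
        · apply hi
          rw [PattAux.interior_eq, ← hvσ, hj, List.drop_zero, hvlen]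
        · apply hx
          have hdd : (τ.drop 1).drop 1 = τ.drop 2 := by rw [List.drop_drop]
          have hvd : v = τ.drop 2 := by
            rw [hj, hdd]
            exact List.take_of_length_le (by rw [List.length_drop]; omega)
          have hσ2 : σ = stdize (τ.drop 2) := by rw [← hvσ, hvd]
          rw [PattAux.exterior_eq hndτ hmono hd3 (hA.symm.trans hσ2)]
          exact hA
      have hbase : ∃ w, w <:+: τ ∧ stdize w = stdize (τ.take (τ.length - 1)) :=
        ⟨τ.take (τ.length - 1), (List.take_prefix _ _).isInfix, rfl⟩
      have hlenρ : (stdize (τ.take (τ.length - 1))).length + 1 = τ.length := by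
        rw [PattAux.length_stdize, List.length_take]; omega
      have hσρ : PattLE σ (stdize (τ.take (τ.length - 1))) := by
        have hsub : τ.take (τ.length - 2) <:+: τ.take (τ.length - 1) := by
          have h' : (τ.take (τ.length - 1)).take (τ.length - 2) = τ.take (τ.length - 2) := by
            rw [List.take_take]; congr 1; omega
          rw [← h']
          exact (List.take_prefix _ _).isInfix
        rw [hA]
        exact PattAux.pattLE_stdize_of_infix hsub
      have huniq : ∀ w, w <:+: τ → w.length + 1 = τ.length → PattLE σ (stdize w) →
          stdize w = stdize (τ.take (τ.length - 1)) := by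
        intro w hw hwlen hσw
        obtain ⟨k, hkle, hk⟩ := PattAux.infix_eq_drop_take hw
        have hk1 : k ≤ 1 := by omega
        interval_cases k
        · have hwd : w = τ.take (τ.length - 1) := by
            conv_lhs => rw [hk]
            rw [List.drop_zero, show w.length = τ.length - 1 from by omega]
          rw [hwd]
        · exfalso
          apply hnS
          have hwd : w = τ.drop 1 := by
            rw [hk]
            exact List.take_of_length_le (by rw [List.length_drop]; omega)
          rwa [hwd] at hσw
      exact ⟨_, hbase, hlenρ, hσρ,
        PattAux.intervals_eq hτfix hσfix hle hlen hbase hlenρ hσρ huniq⟩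
    · -- σ is the suffix pattern
      have hnP : ¬ PattLE σ (stdize (τ.take (τ.length - 1))) := by
        intro hc
        obtain ⟨v, hv, hvσ⟩ := PattAux.exists_infix_of_pattLE_stdize hc
        have hvlen : v.length = τ.length - 2 := by
          rw [← PattAux.length_stdize v, hvσ]; omega
        obtain ⟨j, hjle, hj⟩ := PattAux.infix_eq_drop_take hv
        rw [List.length_take] at hjle
        have hj1 : j ≤ 1 := by omega
        interval_cases j
        · apply hx
          have hvd : v = τ.take (τ.length - 2) := by
            conv_lhs => rw [hj]
            rw [List.drop_zero, hvlen, List.take_take,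
              show min (τ.length - 2) (τ.length - 1) = τ.length - 2 from by omega]
          have hσ2 : σ = stdize (τ.take (τ.length - 2)) := by rw [← hvσ, hvd]
          rw [PattAux.exterior_eq hndτ hmono hd3 (hσ2.symm.trans hB)]
          exact hσ2
        · apply hi
          have hdt : (τ.take (τ.length - 1)).drop 1 = (τ.drop 1).take (τ.length - 2) := by
            rw [List.drop_take, show τ.length - 1 - 1 = τ.length - 2 from by omega]
          have hvd : v = (τ.drop 1).take (τ.length - 2) := by
            conv_lhs => rw [hj]
            rw [hdt, hvlen, List.take_take,
              show min (τ.length - 2) (τ.length - 2) = τ.length - 2 from by omega]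
          rw [PattAux.interior_eq, ← hvσ, hvd]
      have hbase : ∃ w, w <:+: τ ∧ stdize w = stdize (τ.drop 1) :=
        ⟨τ.drop 1, (List.drop_suffix 1 τ).isInfix, rfl⟩
      have hlenρ : (stdize (τ.drop 1)).length + 1 = τ.length := by
        rw [PattAux.length_stdize, List.length_drop]; omega
      have hσρ : PattLE σ (stdize (τ.drop 1)) := by
        have hsub : τ.drop 2 <:+: τ.drop 1 := by
          have h' : (τ.drop 1).drop 1 = τ.drop 2 := by rw [List.drop_drop]
          rw [← h']
          exact (List.drop_suffix _ _).isInfix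
        rw [hB]
        exact PattAux.pattLE_stdize_of_infix hsub
      have huniq : ∀ w, w <:+: τ → w.length + 1 = τ.length → PattLE σ (stdize w) →
          stdize w = stdize (τ.drop 1) := by
        intro w hw hwlen hσw
        obtain ⟨k, hkle, hk⟩ := PattAux.infix_eq_drop_take hw
        have hk1 : k ≤ 1 := by omega
        interval_cases k
        · exfalso
          apply hnP
          have hwd : w = τ.take (τ.length - 1) := by
            conv_lhs => rw [hk]
            rw [List.drop_zero, show w.length = τ.length - 1 from by omega]
          rwa [hwd] at hσw
        · have hwd : w = τ.drop 1 := by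
            rw [hk]
            exact List.take_of_length_le (by rw [List.length_drop]; omega)
          rw [hwd]
      exact ⟨_, hbase, hlenρ, hσρ,
        PattAux.intervals_eq hτfix hσfix hle hlen hbase hlenρ hσρ huniq⟩
  obtain ⟨ρ, hρw, hρlen, hσρ, hOpen, hClosed⟩ := key
  have hρfix : stdize ρ = ρ := by
    obtain ⟨w, _, rfl⟩ := hρw
    exact PattAux.stdize_stdize w
  have hρperm : IsPermList ρ := by
    obtain ⟨w, hw, rfl⟩ := hρw
    have hwlen : w.length + 1 = τ.length := by
      rw [← PattAux.length_stdize w]; omega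
    apply PattAux.isPermList_stdize
    · intro e
      rw [e] at hwlen
      simp at hwlen
      omega
    · exact hw.sublist.nodup hndτ
  have hσρne : σ ≠ ρ := by
    intro e
    have := congrArg List.length e
    omega
  have hρτne : ρ ≠ τ := by
    intro e
    have := congrArg List.length e
    omega
  have hστne : σ ≠ τ := by
    intro e
    have := congrArg List.length e
    omega
  have e1 : μ σ σ = 1 := by
    have h' := hμ σ σ ⟨hσne, hσperm⟩ ⟨hσne, hσperm⟩ (PattAux.pattLE_refl hσfix)
    rw [PattAux.pattInterval_self hσfix, Finset.sum_singleton, if_pos rfl] at h'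
    exact h'
  have e2 : μ σ ρ = -1 := by
    have h' := hμ σ ρ ⟨hσne, hσperm⟩ hρperm hσρ
    rw [PattAux.pattInterval_two hσfix hρfix hσρ (by omega), if_neg hσρne,
      Finset.sum_insert (by simp [hσρne]), Finset.sum_singleton] at h'
    linarith
  have e3 : μ σ τ = 0 := by
    have h' := hμ σ τ ⟨hσne, hσperm⟩ ⟨hτne, hτperm⟩ hle
    rw [hClosed, if_neg hστne,
      Finset.sum_insert (by simp [hσρne, hστne]),
      Finset.sum_insert (by simp [hρτne]), Finset.sum_singleton] at h'
    linarith
  refine ⟨?_, e3⟩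
  rw [hOpen, Finset.card_singleton]
end
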